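/- arXiv:2412.10394 — 7 statements merged into one kernel-verified Lean document; each statement's English description precedes it below -/
import Mathlib

section
/- For every positive integer n, the number of parking functions of length n equals (n+1)^{n-1}. -/
open Finset

/-- Auxiliary: parking condition for `ZMod (n+1)`-valued sequences (0-indexed). -/
def Park (n : ℕ) (v : Fin n → ZMod (n+1)) : Prop :=
  ∀ k : ℕ, 1 ≤ k → k ≤ n → k ≤ (Finset.univ.filter fun j => (v j).val < k).card

/-- Potential function for Pollak's argument. -/
def Gfun (n : ℕ) (β : Fin n → ZMod (n+1)) (c : ZMod (n+1)) : ℤ :=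
  ∑ j, ((β j - c).val : ℤ)

lemma val_sub_one {n : ℕ} (y : ZMod (n+1)) :
    (((y - 1).val : ℤ)) = (y.val : ℤ) - 1 + (n+1) * (if y = 0 then 1 else 0) := by
  by_cases h : y = 0
  · subst h
    simp [ZMod.val_neg_one]
  · have h1 : 1 ≤ y.val := Nat.one_le_iff_ne_zero.2 (by simpa [ZMod.val_eq_zero] using h)
    have h2 : y.val < n + 1 := ZMod.val_lt y
    have hy : y - 1 = ((y.val - 1 : ℕ) : ZMod (n+1)) := by
      have hv : ((y.val : ℕ) : ZMod (n+1)) = y := by simp [ZMod.natCast_val, ZMod.cast_id]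
      rw [Nat.cast_sub h1, hv, Nat.cast_one]
    rw [hy, ZMod.val_cast_of_lt (by omega)]
    simp only [h, if_false]
    push_cast [Nat.cast_sub h1]
    ring

lemma G_step {n : ℕ} (β : Fin n → ZMod (n+1)) (c : ZMod (n+1)) :
    Gfun n β (c+1) = Gfun n β c - n
      + (n+1) * ((Finset.univ.filter fun j => β j = c).card : ℤ) := by
  have : ∀ j : Fin n, ((β j - (c+1)).val : ℤ)
      = ((β j - c).val : ℤ) - 1 + (n+1) * (if β j = c then 1 else 0) := by
    intro j
    have : β j - (c+1) = (β j - c) - 1 := by ring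
    rw [this, val_sub_one]
    congr 2
    simp [sub_eq_zero]
  unfold Gfun
  rw [Finset.sum_congr rfl fun j _ => this j]
  rw [Finset.sum_add_distrib, Finset.sum_sub_distrib, ← Finset.mul_sum]
  have hcard : (∑ j : Fin n, (if β j = c then (1:ℤ) else 0))
      = ((Finset.univ.filter fun j => β j = c).card : ℤ) := by
    rw [Finset.card_filter]
    push_cast
    rfl
  rw [hcard]
  simp [Finset.card_univ]

lemma G_add {n : ℕ} (β : Fin n → ZMod (n+1)) (c : ZMod (n+1)) (k : ℕ) :
    Gfun n β (c + (k : ZMod (n+1))) = Gfun n β c - n * k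
      + (n+1) * ∑ t ∈ Finset.range k,
          (((Finset.univ.filter fun j => β j = c + (t : ZMod (n+1))).card : ℤ)) := by
  induction k with
  | zero => simp
  | succ k ih =>
    have : c + ((k+1 : ℕ) : ZMod (n+1)) = (c + (k : ZMod (n+1))) + 1 := by
      push_cast; ring
    rw [this, G_step, ih, Finset.sum_range_succ]
    push_cast
    ring

lemma filter_lt_card {n : ℕ} (v : Fin n → ℕ) (k : ℕ) :
    (Finset.univ.filter fun j => v j < k).card
      = ∑ t ∈ Finset.range k, (Finset.univ.filter fun j => v j = t).card := by
  induction k with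
  | zero => simp
  | succ k ih =>
    rw [Finset.sum_range_succ, ← ih]
    have hp : (Finset.univ.filter fun j : Fin n => v j < k + 1)
        = (Finset.univ.filter fun j => v j < k) ∪ (Finset.univ.filter fun j => v j = k) := by
      rw [← Finset.filter_or]
      apply Finset.filter_congr
      intro j _
      constructor <;> intro h <;> omega
    rw [hp, Finset.card_union_of_disjoint]
    rw [Finset.disjoint_left]
    intro a ha hb
    simp only [Finset.mem_filter] at ha hb
    omega

lemma eq_add_iff_val {n : ℕ} (x c : ZMod (n+1)) (t : ℕ) (ht : t < n + 1) :
    x = c + (t : ZMod (n+1)) ↔ (x - c).val = t := by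
  constructor
  · intro h
    rw [h]
    simp [ZMod.val_cast_of_lt ht]
  · intro h
    have : x - c = (t : ZMod (n+1)) := by
      rw [← h]; simp [ZMod.natCast_val, ZMod.cast_id]
    exact (sub_eq_iff_eq_add.mp this).trans (add_comm _ _)

lemma G_add' {n : ℕ} (β : Fin n → ZMod (n+1)) (c : ZMod (n+1)) (k : ℕ) (hk : k ≤ n + 1) :
    Gfun n β (c + (k : ZMod (n+1))) = Gfun n β c - n * k
      + (n+1) * ((Finset.univ.filter fun j => (β j - c).val < k).card : ℤ) := by
  rw [G_add]
  congr 1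
  rw [filter_lt_card (fun j => (β j - c).val) k]
  push_cast
  congr 1
  apply Finset.sum_congr rfl
  intro t ht
  exact congrArg (fun s => ((Finset.card s : ℕ) : ℤ))
    (Finset.filter_congr fun j _ => eq_add_iff_val (β j) c t (by simp at ht; omega))

lemma G_ne {n : ℕ} (β : Fin n → ZMod (n+1)) (c : ZMod (n+1)) (k : ℕ)
    (hk1 : 1 ≤ k) (hk2 : k ≤ n) : Gfun n β (c + (k : ZMod (n+1))) ≠ Gfun n β c := by
  intro h
  rw [G_add' β c k (by omega)] at h
  set C : ℤ := ((Finset.univ.filter fun j => (β j - c).val < k).card : ℤ) with hC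
  have h1 : (n + 1 : ℤ) * C = n * k := by linarith
  have h2 : (n + 1 : ℤ) ∣ (k : ℤ) := by
    refine ⟨(k : ℤ) - C, ?_⟩
    have : (n+1 : ℤ) * ((k:ℤ) - C) = (n+1)*k - (n+1)*C := by ring
    rw [this, h1]
    ring
  have h3 : (n + 1 : ℤ) ≤ k := Int.le_of_dvd (by exact_mod_cast hk1) h2
  omega

/-- `Park (β - c)` holds iff `c` is the strict minimizer of `Gfun β`. -/
lemma park_iff_min {n : ℕ} (β : Fin n → ZMod (n+1)) (c : ZMod (n+1)) :
    Park n (fun j => β j - c) ↔ ∀ c', c' ≠ c → Gfun n β c < Gfun n β c' := by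
  have key : ∀ k : ℕ, 1 ≤ k → k ≤ n →
      ((k ≤ (Finset.univ.filter fun j => (β j - c).val < k).card) ↔
        Gfun n β c < Gfun n β (c + (k : ZMod (n+1)))) := by
    intro k hk1 hk2
    rw [G_add' β c k (by omega)]
    set C : ℤ := ((Finset.univ.filter fun j => (β j - c).val < k).card : ℤ) with hC
    have hC0 : 0 ≤ C := by positivity
    constructor
    · intro h
      have : (k : ℤ) ≤ C := by rw [hC]; exact_mod_cast h
      nlinarith
    · intro h
      by_contra hcon
      push_neg at hcon
      have : C ≤ (k : ℤ) - 1 := by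
        have : C < (k : ℤ) := by rw [hC]; exact_mod_cast hcon
        omega
      have hkn : (k : ℤ) ≤ n := by exact_mod_cast hk2
      nlinarith
  constructor
  · intro hP c' hc'
    have hne : c' - c ≠ 0 := sub_ne_zero.2 hc'
    set k := (c' - c).val with hk
    have hk1 : 1 ≤ k := by
      rw [hk]
      exact Nat.one_le_iff_ne_zero.2 (by simpa [ZMod.val_eq_zero] using hne)
    have hk2 : k ≤ n := by have := ZMod.val_lt (c' - c); omega
    have hck : c + (k : ZMod (n+1)) = c' := by
      rw [hk]
      simp [ZMod.natCast_val, ZMod.cast_id]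
    rw [← hck]
    exact (key k hk1 hk2).1 (hP k hk1 hk2)
  · intro hmin k hk1 hk2
    refine (key k hk1 hk2).2 ?_
    apply hmin
    intro h
    have : (k : ZMod (n+1)) = 0 := by
      have := congrArg (fun x => x - c) h
      simpa [add_sub_cancel_left] using this
    have hv : ((k : ZMod (n+1))).val = k := ZMod.val_cast_of_lt (by omega)
    rw [this, ZMod.val_zero] at hv
    omega

lemma exists_unique_shift {n : ℕ} (hn : 0 < n) (β : Fin n → ZMod (n+1)) :
    ∃! c : ZMod (n+1), Park n (fun j => β j - c) := by
  obtain ⟨c, -, hc⟩ := Finset.exists_min_image Finset.univ (Gfun n β) ⟨0, Finset.mem_univ 0⟩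
  have hstrict : ∀ c', c' ≠ c → Gfun n β c < Gfun n β c' := by
    intro c' hc'
    refine lt_of_le_of_ne (hc c' (Finset.mem_univ c')) ?_
    have hne : c' - c ≠ 0 := sub_ne_zero.2 hc'
    set k := (c' - c).val with hk
    have hk1 : 1 ≤ k := by
      rw [hk]
      exact Nat.one_le_iff_ne_zero.2 (by simpa [ZMod.val_eq_zero] using hne)
    have hk2 : k ≤ n := by have := ZMod.val_lt (c' - c); omega
    have hck : c + (k : ZMod (n+1)) = c' := by
      rw [hk]; simp [ZMod.natCast_val, ZMod.cast_id]
    rw [← hck]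
    exact fun h => G_ne β c k hk1 hk2 h.symm
  refine ⟨c, (park_iff_min β c).2 hstrict, ?_⟩
  intro c' hc'
  by_contra hne
  have h1 := ((park_iff_min β c').1 hc') c (Ne.symm hne)
  have h2 := hstrict c' hne
  omega

/-- A sequence `α : Fin n → ℕ` (with entries in `{1, …, n}`) is a parking function of
length `n` if for every `i ∈ {1, …, n}`, the number of indices `j` with `α j ≤ i`
is at least `i`. -/
def IsParkingFunction (n : ℕ) (α : Fin n → ℕ) : Prop :=
  (∀ j, α j ∈ Finset.Icc 1 n) ∧
    ∀ i ∈ Finset.Icc 1 n, i ≤ (Finset.univ.filter fun j => α j ≤ i).card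

lemma park_all_lt {n : ℕ} (hn : 0 < n) {v : Fin n → ZMod (n+1)} (hv : Park n v) :
    ∀ j, (v j).val < n := by
  have h := hv n hn le_rfl
  have huniv : (Finset.univ.filter fun j => (v j).val < n) = Finset.univ := by
    apply Finset.eq_univ_of_card
    have := Finset.card_filter_le (Finset.univ : Finset (Fin n)) (fun j => (v j).val < n)
    simp only [Finset.card_univ, Fintype.card_fin] at *
    omega
  intro j
  have hj : j ∈ Finset.univ.filter (fun j => (v j).val < n) := by
    rw [huniv]; exact Finset.mem_univ j
  exact (Finset.mem_filter.1 hj).2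

noncomputable def parkEquiv (n : ℕ) (hn : 0 < n) :
    {α : Fin n → ℕ // IsParkingFunction n α} ≃ {v : Fin n → ZMod (n+1) // Park n v} where
  toFun a := ⟨fun j => ((a.1 j - 1 : ℕ) : ZMod (n+1)), by
    intro k hk1 hk2
    have h := a.2.2 k (Finset.mem_Icc.2 ⟨hk1, hk2⟩)
    have heq : (Finset.univ.filter fun j => (((a.1 j - 1 : ℕ) : ZMod (n+1))).val < k)
        = Finset.univ.filter fun j => a.1 j ≤ k := by
      apply Finset.filter_congr
      intro j _
      have hm := Finset.mem_Icc.1 (a.2.1 j)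
      rw [ZMod.val_cast_of_lt (by omega)]
      omega
    rw [heq]
    exact h⟩
  invFun v := ⟨fun j => (v.1 j).val + 1, by
    constructor
    · intro j
      have := park_all_lt hn v.2 j
      simp only [Finset.mem_Icc]
      omega
    · intro i hi
      obtain ⟨hi1, hi2⟩ := Finset.mem_Icc.1 hi
      have heq : (Finset.univ.filter fun j => (v.1 j).val + 1 ≤ i)
          = Finset.univ.filter fun j => (v.1 j).val < i := by
        apply Finset.filter_congr
        intro j _
        omega
      rw [heq]
      exact v.2 i hi1 hi2⟩
  left_inv a := by
    apply Subtype.ext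
    funext j
    have hm := Finset.mem_Icc.1 (a.2.1 j)
    simp only
    rw [ZMod.val_cast_of_lt (by omega)]
    omega
  right_inv v := by
    apply Subtype.ext
    funext j
    simp only [Nat.add_sub_cancel]
    simp [ZMod.natCast_val, ZMod.cast_id]

noncomputable def shiftEquiv (n : ℕ) (hn : 0 < n) :
    ({v : Fin n → ZMod (n+1) // Park n v} × ZMod (n+1)) ≃ (Fin n → ZMod (n+1)) where
  toFun p := fun j => p.1.1 j + p.2
  invFun β :=
    (⟨fun j => β j - (exists_unique_shift hn β).choose,
      (exists_unique_shift hn β).choose_spec.1⟩,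
     (exists_unique_shift hn β).choose)
  left_inv p := by
    obtain ⟨⟨v, hv⟩, c⟩ := p
    have hP : Park n (fun j => (fun j => v j + c) j - c) := by
      simpa using hv
    have hc := ((exists_unique_shift hn (fun j => v j + c)).choose_spec.2 c hP).symm
    simp only [Prod.mk.injEq, Subtype.mk.injEq]
    constructor
    · funext j
      rw [hc]
      ring
    · exact hc
  right_inv β := by
    funext j
    simp

/-- For every positive integer `n`, the number of parking functions of
length `n` equals `(n+1)^(n-1)`. -/
theorem card_parkingFunctions (n : ℕ) (hn : 0 < n) :
    Nat.card {α : Fin n → ℕ // IsParkingFunction n α} = (n + 1) ^ (n - 1) := by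
  have h1 : Nat.card {α : Fin n → ℕ // IsParkingFunction n α}
      = Nat.card {v : Fin n → ZMod (n+1) // Park n v} := Nat.card_congr (parkEquiv n hn)
  have h2 : Nat.card {v : Fin n → ZMod (n+1) // Park n v} * (n + 1) = (n + 1) ^ n := by
    have := Nat.card_congr (shiftEquiv n hn)
    rw [Nat.card_prod] at this
    rw [Nat.card_eq_fintype_card (α := ZMod (n+1)), ZMod.card] at this
    rw [this]
    rw [Nat.card_eq_fintype_card, Fintype.card_fun]
    simp [ZMod.card]
  rw [h1]
  have h3 : (n + 1) ^ n = (n + 1) ^ (n - 1) * (n + 1) := by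
    rw [← pow_succ]
    congr 1
    omega
  rw [h3] at h2
  exact Nat.eq_of_mul_eq_mul_right (by omega) h2
end

section
/- For every positive integer n and every function γ : {1, …, n} → ℤ/(n+1)ℤ, there is exactly one residue c ∈ ℤ/(n+1)ℤ such that the sequence α defined by letting α_j be the unique representative of γ_j − c lying in {1, …, n+1} is a parking function of length n (in particular, all α_j ≤ n). -/
/-- The unique representative of a residue `x ∈ ℤ/(n+1)ℤ` lying in `{1, …, n+1}`. -/
def repOneBased (n : ℕ) (x : ZMod (n + 1)) : ℕ :=
  if x.val = 0 then n + 1 else x.val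

namespace PFaux

variable {n : ℕ} (γ : Fin n → ZMod (n + 1))

/-- Number of indices whose value is `d`. -/
noncomputable def w (d : ZMod (n + 1)) : ℕ :=
  (Finset.univ.filter fun j => γ j = d).card

/-- Prefix sums of `w` (viewed one-based) minus the position. -/
noncomputable def P (x : ℕ) : ℤ :=
  (∑ t ∈ Finset.range x, (w γ ((t + 1 : ℕ) : ZMod (n + 1)) : ℤ)) - x

lemma sum_w : (∑ d : ZMod (n + 1), w γ d) = n := by
  classical
  have h := Finset.card_eq_sum_card_fiberwise
    (f := γ) (s := (Finset.univ : Finset (Fin n)))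
    (t := (Finset.univ : Finset (ZMod (n + 1)))) (fun x _ => Finset.mem_univ _)
  simpa [w] using h.symm

lemma sum_circle (b : ℕ) :
    (∑ t ∈ Finset.range (n + 1), w γ ((b + t : ℕ) : ZMod (n + 1))) = n := by
  classical
  have h : (∑ t ∈ Finset.range (n + 1), w γ ((b + t : ℕ) : ZMod (n + 1)))
      = ∑ d : ZMod (n + 1), w γ d := by
    refine Finset.sum_nbij' (fun t => ((b + t : ℕ) : ZMod (n + 1)))
      (fun d => (d - (b : ZMod (n + 1))).val) (fun a _ => Finset.mem_univ _)
      (fun d _ => Finset.mem_range.mpr (ZMod.val_lt _)) ?_ ?_ (fun a _ => rfl)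
    · intro t ht
      have ht' : t < n + 1 := Finset.mem_range.mp ht
      show (((b + t : ℕ) : ZMod (n + 1)) - (b : ZMod (n + 1))).val = t
      have h2 : ((b + t : ℕ) : ZMod (n + 1)) - (b : ZMod (n + 1)) = ((t : ℕ) : ZMod (n + 1)) := by
        push_cast; ring
      rw [h2, ZMod.val_natCast, Nat.mod_eq_of_lt ht']
    · intro d _
      have h1 : (((d - (b : ZMod (n + 1))).val : ℕ) : ZMod (n + 1)) = d - (b : ZMod (n + 1)) :=
        ZMod.natCast_rightInverse _
      show ((b + (d - (b : ZMod (n + 1))).val : ℕ) : ZMod (n + 1)) = d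
      push_cast [h1]
      try rw [h1]
      try ring
  rw [h, sum_w]

lemma P_add (x i : ℕ) :
    P γ (x + i) =
      P γ x + (∑ t ∈ Finset.range i, (w γ ((x + t + 1 : ℕ) : ZMod (n + 1)) : ℤ)) - i := by
  unfold P
  rw [Finset.sum_range_add]
  have : ∀ t, ((x + t + 1 : ℕ) : ZMod (n + 1)) = ((x + (t + 1) : ℕ) : ZMod (n + 1)) := by
    intro t; rfl
  simp only [this]
  push_cast
  ring

lemma P_period (x : ℕ) : P γ (x + (n + 1)) = P γ x - 1 := by
  rw [P_add]
  have hnat : (∑ t ∈ Finset.range (n + 1), w γ ((x + t + 1 : ℕ) : ZMod (n + 1))) = n := by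
    calc (∑ t ∈ Finset.range (n + 1), w γ ((x + t + 1 : ℕ) : ZMod (n + 1)))
        = ∑ t ∈ Finset.range (n + 1), w γ ((x + 1 + t : ℕ) : ZMod (n + 1)) :=
          Finset.sum_congr rfl fun t _ => by rw [show x + t + 1 = x + 1 + t by omega]
      _ = n := sum_circle γ (x + 1)
  have h : (∑ t ∈ Finset.range (n + 1), (w γ ((x + t + 1 : ℕ) : ZMod (n + 1)) : ℤ)) = n := by
    rw [← Nat.cast_sum, hnat]
  rw [h]; push_cast; ring

lemma count_eq (c : ZMod (n + 1)) (i : ℕ) (hi : i ≤ n) :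
    ((Finset.univ.filter fun j => repOneBased n (γ j - c) ≤ i).card)
      = ∑ t ∈ Finset.range i, w γ (c + ((t + 1 : ℕ) : ZMod (n + 1))) := by
  classical
  set S : Finset (ZMod (n + 1)) :=
    (Finset.range i).image (fun t => c + ((t + 1 : ℕ) : ZMod (n + 1))) with hS
  have hmem : ∀ j, repOneBased n (γ j - c) ≤ i ↔ γ j ∈ S := by
    intro j
    constructor
    · intro h
      set v := (γ j - c).val with hv
      have hv0 : v ≠ 0 := by
        intro h0
        simp only [repOneBased, ← hv, h0, if_true] at h
        omega
      have hvi : v ≤ i := by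
        simp only [repOneBased, ← hv, hv0, if_false] at h
        exact h
      refine Finset.mem_image.mpr ⟨v - 1, Finset.mem_range.mpr (by omega), ?_⟩
      have h1 : v - 1 + 1 = v := by omega
      rw [h1]
      have : ((v : ℕ) : ZMod (n + 1)) = γ j - c := ZMod.natCast_rightInverse _
      rw [this]; ring
    · intro h
      obtain ⟨t, ht, hteq⟩ := Finset.mem_image.mp h
      have ht' : t < i := Finset.mem_range.mp ht
      have : γ j - c = ((t + 1 : ℕ) : ZMod (n + 1)) := by rw [← hteq]; ring
      have hval : (γ j - c).val = t + 1 := by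
        rw [this, ZMod.val_natCast, Nat.mod_eq_of_lt (by omega)]
      simp only [repOneBased, hval]
      have : t + 1 ≠ 0 := by omega
      simp only [this, if_false]
      omega
  have hfilter : (Finset.univ.filter fun j => repOneBased n (γ j - c) ≤ i)
      = Finset.univ.filter fun j => γ j ∈ S :=
    Finset.filter_congr fun j _ => by rw [hmem j]
  rw [hfilter]
  have hcard := Finset.card_eq_sum_card_fiberwise
    (f := γ) (s := Finset.univ.filter fun j => γ j ∈ S) (t := S)
    (fun x hx => (Finset.mem_filter.mp hx).2)
  rw [hcard]
  have hfib : ∀ d ∈ S, ((Finset.univ.filter fun j => γ j ∈ S).filter fun j => γ j = d).card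
      = w γ d := by
    intro d hd
    congr 1
    ext j
    simp only [Finset.mem_filter, Finset.mem_univ, true_and, w]
    constructor
    · exact fun h => h.2
    · intro h; exact ⟨by rw [h]; exact hd, h⟩
  rw [Finset.sum_congr rfl hfib, hS]
  rw [Finset.sum_image]
  intro t1 h1 t2 h2 heq
  have h1' : t1 < i := Finset.mem_range.mp h1
  have h2' : t2 < i := Finset.mem_range.mp h2
  have h3 : ((t1 + 1 : ℕ) : ZMod (n + 1)) = ((t2 + 1 : ℕ) : ZMod (n + 1)) :=
    add_left_cancel heq
  have h4 := congrArg ZMod.val h3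
  rw [ZMod.val_natCast, ZMod.val_natCast, Nat.mod_eq_of_lt (by omega),
    Nat.mod_eq_of_lt (by omega)] at h4
  omega

lemma count_eq' (c : ZMod (n + 1)) (i : ℕ) (hi : i ≤ n) :
    (((Finset.univ.filter fun j => repOneBased n (γ j - c) ≤ i).card : ℤ))
      = P γ (c.val + i) - P γ c.val + i := by
  rw [count_eq γ c i hi, P_add]
  have e : ∀ t : ℕ, ((c.val + t + 1 : ℕ) : ZMod (n + 1)) = c + ((t + 1 : ℕ) : ZMod (n + 1)) := by
    intro t
    have hc : ((c.val : ℕ) : ZMod (n + 1)) = c := ZMod.natCast_rightInverse _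
    push_cast
    rw [hc]
    try ring
  have hsum : (∑ t ∈ Finset.range i, (w γ ((c.val + t + 1 : ℕ) : ZMod (n + 1)) : ℤ))
      = ((∑ t ∈ Finset.range i, w γ (c + ((t + 1 : ℕ) : ZMod (n + 1))) : ℕ) : ℤ) := by
    rw [Nat.cast_sum]
    exact Finset.sum_congr rfl fun t _ => by rw [e t]
  rw [hsum]
  ring

lemma key (hn : 0 < n) (c : ZMod (n + 1)) :
    IsParkingFunction n (fun j => repOneBased n (γ j - c)) ↔
      ∀ i ∈ Finset.Icc 1 n, P γ c.val ≤ P γ (c.val + i) := by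
  classical
  constructor
  · intro h i hi
    obtain ⟨hi1, hi2⟩ := Finset.mem_Icc.mp hi
    have h2 := h.2 i hi
    have hc := count_eq' γ c i hi2
    have : (i : ℤ) ≤ ((Finset.univ.filter fun j => repOneBased n (γ j - c) ≤ i).card : ℤ) := by
      exact_mod_cast h2
    linarith [hc ▸ this]
  · intro h
    have hcount : ∀ i, 1 ≤ i → i ≤ n →
        i ≤ (Finset.univ.filter fun j => repOneBased n (γ j - c) ≤ i).card := by
      intro i hi1 hi2
      have hh := h i (Finset.mem_Icc.mpr ⟨hi1, hi2⟩)
      have hc := count_eq' γ c i hi2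
      have : (i : ℤ) ≤ ((Finset.univ.filter fun j => repOneBased n (γ j - c) ≤ i).card : ℤ) := by
        rw [hc]; linarith
      exact_mod_cast this
    refine ⟨?_, fun i hi => hcount i (Finset.mem_Icc.mp hi).1 (Finset.mem_Icc.mp hi).2⟩
    have hn' := hcount n hn le_rfl
    have hle : (Finset.univ.filter fun j => repOneBased n (γ j - c) ≤ n).card ≤ n := by
      simpa using Finset.card_filter_le Finset.univ fun j => repOneBased n (γ j - c) ≤ n
    have huniv : (Finset.univ.filter fun j => repOneBased n (γ j - c) ≤ n)
        = Finset.univ := by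
      apply Finset.eq_univ_of_card
      simp only [Fintype.card_fin]
      omega
    intro j
    have hjn : repOneBased n (γ j - c) ≤ n := by
      have : j ∈ Finset.univ.filter fun j => repOneBased n (γ j - c) ≤ n := by
        rw [huniv]; exact Finset.mem_univ j
      exact (Finset.mem_filter.mp this).2
    have hj1 : 1 ≤ repOneBased n (γ j - c) := by
      unfold repOneBased
      split_ifs with h0
      · omega
      · omega
    exact Finset.mem_Icc.mpr ⟨hj1, hjn⟩

end PFaux

/-- For every positive integer `n` and every `γ : {1,…,n} → ℤ/(n+1)ℤ`,
there is exactly one residue `c` such that the sequence `α` defined by letting `α j` be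
the representative of `γ j - c` in `{1, …, n+1}` is a parking function of length `n`. -/
theorem existsUnique_shift_isParkingFunction (n : ℕ) (hn : 0 < n)
    (γ : Fin n → ZMod (n + 1)) :
    ∃! c : ZMod (n + 1),
      IsParkingFunction n (fun j => repOneBased n (γ j - c)) := by
  set Q : ℕ → Prop := fun a => ∀ i ∈ Finset.Icc 1 n, PFaux.P γ a ≤ PFaux.P γ (a + i) with hQ
  -- uniqueness auxiliary
  have uniq_aux : ∀ a b : ℕ, a < n + 1 → b < n + 1 → a < b → Q a → Q b → False := by
    intro a b ha hb hab Qa Qb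
    have h1 := Qa (b - a) (Finset.mem_Icc.mpr ⟨by omega, by omega⟩)
    rw [show a + (b - a) = b by omega] at h1
    have h2 := Qb ((n + 1) - (b - a)) (Finset.mem_Icc.mpr ⟨by omega, by omega⟩)
    rw [show b + ((n + 1) - (b - a)) = a + (n + 1) by omega, PFaux.P_period] at h2
    linarith
  -- existence of the minimal minimizer
  set good : ℕ → Prop := fun r => ∀ b < n + 1, PFaux.P γ r ≤ PFaux.P γ b with hgood
  have hex : ∃ r, r < n + 1 ∧ good r := by
    obtain ⟨a0, ha0, hmin⟩ := Finset.exists_min_image (Finset.range (n + 1)) (PFaux.P γ)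
      ⟨0, Finset.mem_range.mpr (by omega)⟩
    exact ⟨a0, Finset.mem_range.mp ha0,
      fun b hb => hmin b (Finset.mem_range.mpr hb)⟩
  haveI : DecidablePred (fun r => r < n + 1 ∧ good r) := Classical.decPred _
  set a : ℕ := Nat.find hex with haa
  have haspec := Nat.find_spec hex
  have haR : a < n + 1 := haspec.1
  have hamin : good a := haspec.2
  have hstrict : ∀ r, r < a → PFaux.P γ a < PFaux.P γ r := by
    intro r hr
    have hrR : r < n + 1 := by omega
    have hle := hamin r hrR
    rcases lt_or_eq_of_le hle with h | h
    · exact h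
    · exfalso
      exact Nat.find_min hex hr ⟨hrR, fun b hb => h ▸ hamin b hb⟩
  have Qa : Q a := by
    intro i hi
    obtain ⟨hi1, hi2⟩ := Finset.mem_Icc.mp hi
    by_cases hcase : a + i < n + 1
    · exact hamin (a + i) hcase
    · have hr : a + i - (n + 1) < a := by omega
      have h1 := hstrict (a + i - (n + 1)) hr
      have h2 : PFaux.P γ (a + i) = PFaux.P γ (a + i - (n + 1)) - 1 := by
        rw [← PFaux.P_period γ (a + i - (n + 1))]
        congr 1
        omega
      linarith
  have hval : ((a : ZMod (n + 1)).val) = a := ZMod.val_natCast_of_lt haR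
  refine ⟨(a : ZMod (n + 1)), (PFaux.key γ hn _).mpr (by rw [hval]; exact Qa), ?_⟩
  intro c' h'
  have Q' : Q c'.val := (PFaux.key γ hn c').mp h'
  have hv' : c'.val < n + 1 := ZMod.val_lt c'
  have heq : c'.val = a := by
    rcases lt_trichotomy c'.val a with h | h | h
    · exact absurd (uniq_aux c'.val a hv' haR h Q' Qa) (fun f => f)
    · exact h
    · exact absurd (uniq_aux a c'.val haR hv' h Qa Q') (fun f => f)
  have : ((c'.val : ℕ) : ZMod (n + 1)) = c' := ZMod.natCast_rightInverse _
  rw [← this, heq]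
end

section
/- Let n be a positive integer and let π_1 < π_2 < ⋯ < π_{n+1} be a maximal chain of NC_{n+1}, so that for each j ∈ {1, …, n} the partition π_{j+1} is obtained from π_j by merging two blocks A and B of π_j with min A < min B. Define α_j = max{ i ∈ A : i < min B }. Then the sequence α = (α_1, …, α_n) is a parking function of length n. -/
/-- A collection of blocks `C` (a partition of `Fin m` in the sense of
`Setoid.IsPartition`) is noncrossing if there do not exist `a < b < c < d` with
`a, c` in one block and `b, d` in a different block. -/
def Noncrossing {m : ℕ} (C : Set (Set (Fin m))) : Prop :=
  ∀ B ∈ C, ∀ B' ∈ C, ∀ a b c d : Fin m,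
    a < b → b < c → c < d → a ∈ B → c ∈ B → b ∈ B' → d ∈ B' → B = B'

/-- Let `π 0 < π 1 < ⋯ < π n` be a maximal chain of `NC_{n+1}`
(the elements of `{1, …, n+1}` are modelled by `Fin (n+1)`, with `x` standing for
`x + 1`), so that for each `j` the partition `π j.succ` is obtained from `π j.castSucc`
by merging two of its blocks `A j` and `B j`, where `min (A j) = a j < b j = min (B j)`.
Let `g j = max { i ∈ A j : i < min (B j) }` and let `α j ∈ {1, …, n+1}` be the
corresponding label `(g j) + 1`.  Then `α` is a parking function of length `n`. -/
theorem stanley_labels_isParkingFunction (n : ℕ) (hn : 0 < n)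
    (π : Fin (n + 1) → Set (Set (Fin (n + 1))))
    (hpart : ∀ j, Setoid.IsPartition (π j)) (hnc : ∀ j, Noncrossing (π j))
    (A B : Fin n → Set (Fin (n + 1))) (a b g : Fin n → Fin (n + 1))
    (hA : ∀ j, A j ∈ π j.castSucc) (hB : ∀ j, B j ∈ π j.castSucc)
    (hAB : ∀ j, A j ≠ B j)
    (hmerge : ∀ j, π j.succ = (π j.castSucc \ {A j, B j}) ∪ {A j ∪ B j})
    (ha : ∀ j, IsLeast (A j) (a j)) (hb : ∀ j, IsLeast (B j) (b j))
    (hab : ∀ j, a j < b j)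
    (hg : ∀ j, IsGreatest {i | i ∈ A j ∧ i < b j} (g j)) :
    IsParkingFunction n (fun j => (g j : ℕ) + 1) := by
  classical
  -- the block of `x` in partition `π t`
  have hpart2 : ∀ (t : Fin (n+1)) (x : Fin (n+1)),
      ∃ T, (T ∈ π t ∧ x ∈ T) ∧ ∀ y, y ∈ π t ∧ x ∈ y → y = T := fun t x => (hpart t).2 x
  choose Blk hBlk' hBuniq using hpart2
  have hBlkmem : ∀ (t x : Fin (n+1)), Blk t x ∈ π t := fun t x => (hBlk' t x).1
  have hxBlk : ∀ (t x : Fin (n+1)), x ∈ Blk t x := fun t x => (hBlk' t x).2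
  have hBlk_of : ∀ (t x : Fin (n+1)) (T : Set (Fin (n+1))), T ∈ π t → x ∈ T → T = Blk t x :=
    fun t x T h1 h2 => hBuniq t x T ⟨h1, h2⟩
  -- the minimum (as a natural number) of the block of `x` in `π t`
  have hMex : ∀ (t x : Fin (n+1)), ∃ mv : ℕ,
      (∃ y, y ∈ Blk t x ∧ (y : ℕ) = mv) ∧ ∀ y, y ∈ Blk t x → mv ≤ (y : ℕ) := by
    intro t x
    refine ⟨sInf (Fin.val '' Blk t x), ?_, ?_⟩
    · obtain ⟨y, hy, hyv⟩ := Nat.sInf_mem (s := Fin.val '' Blk t x) ⟨x, x, hxBlk t x, rfl⟩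
      exact ⟨y, hy, hyv⟩
    · intro y hy
      exact Nat.sInf_le ⟨y, hy, rfl⟩
  choose M hMmem hMle using hMex
  have hMself : ∀ t x, M t x ≤ (x : ℕ) := fun t x => hMle t x x (hxBlk t x)
  -- basic block facts
  have hbA : ∀ j, b j ∉ A j := by
    intro j h
    have h1 := hBlk_of j.castSucc (b j) _ (hA j) h
    have h2 := hBlk_of j.castSucc (b j) _ (hB j) (hb j).1
    exact hAB j (h1.trans h2.symm)
  have hUmem : ∀ j : Fin n, A j ∪ B j ∈ π j.succ := by
    intro j
    rw [hmerge j]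
    exact Or.inr rfl
  -- block dynamics
  have hBsucc_out : ∀ (j : Fin n) (x : Fin (n+1)), x ∉ A j → x ∉ B j →
      Blk j.succ x = Blk j.castSucc x := by
    intro j x hxA hxB
    have hT : Blk j.castSucc x ∈ π j.succ := by
      rw [hmerge j]
      refine Or.inl ⟨hBlkmem j.castSucc x, ?_⟩
      rintro (hEA | hEB)
      · exact hxA (hEA ▸ hxBlk j.castSucc x)
      · exact hxB (hEB ▸ hxBlk j.castSucc x)
    exact (hBlk_of j.succ x _ hT (hxBlk j.castSucc x)).symm
  -- min of the block dynamics
  have hMA : ∀ (j : Fin n) (x : Fin (n+1)), x ∈ A j → M j.castSucc x = (a j : ℕ) := by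
    intro j x hx
    have hE : Blk j.castSucc x = A j := (hBlk_of j.castSucc x _ (hA j) hx).symm
    have h1 : M j.castSucc x ≤ (a j : ℕ) := hMle _ _ _ (hE ▸ (ha j).1)
    obtain ⟨y, hy, hyv⟩ := hMmem j.castSucc x
    have h2 : (a j : ℕ) ≤ (y : ℕ) := (ha j).2 (hE ▸ hy)
    omega
  have hMB : ∀ (j : Fin n) (x : Fin (n+1)), x ∈ B j → M j.castSucc x = (b j : ℕ) := by
    intro j x hx
    have hE : Blk j.castSucc x = B j := (hBlk_of j.castSucc x _ (hB j) hx).symm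
    have h1 : M j.castSucc x ≤ (b j : ℕ) := hMle _ _ _ (hE ▸ (hb j).1)
    obtain ⟨y, hy, hyv⟩ := hMmem j.castSucc x
    have h2 : (b j : ℕ) ≤ (y : ℕ) := (hb j).2 (hE ▸ hy)
    omega
  have hMsuccAB : ∀ (j : Fin n) (x : Fin (n+1)), x ∈ A j ∪ B j → M j.succ x = (a j : ℕ) := by
    intro j x hx
    have hE : Blk j.succ x = A j ∪ B j := (hBlk_of j.succ x _ (hUmem j) hx).symm
    have h1 : M j.succ x ≤ (a j : ℕ) := hMle _ _ _ (hE ▸ (Or.inl (ha j).1 : a j ∈ A j ∪ B j))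
    obtain ⟨y, hy, hyv⟩ := hMmem j.succ x
    have hy' : y ∈ A j ∪ B j := hE ▸ hy
    have h2 : (a j : ℕ) ≤ (y : ℕ) := by
      rcases hy' with h | h
      · exact (ha j).2 h
      · have hby : (b j : ℕ) ≤ (y : ℕ) := (hb j).2 h
        have : (a j : ℕ) < (b j : ℕ) := hab j
        omega
    omega
  have hMout : ∀ (j : Fin n) (x : Fin (n+1)), x ∉ A j → x ∉ B j →
      M j.succ x = M j.castSucc x := by
    intro j x hxA hxB
    have hE := hBsucc_out j x hxA hxB
    obtain ⟨y, hy, hyv⟩ := hMmem j.succ x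
    obtain ⟨z, hz, hzv⟩ := hMmem j.castSucc x
    have h1 : M j.castSucc x ≤ (y : ℕ) := hMle _ _ _ (hE ▸ hy)
    have h2 : M j.succ x ≤ (z : ℕ) := hMle _ _ _ (hE ▸ hz)
    omega
  -- cardinality counting: `π 0` consists of singletons and `π (last)` is one block
  have hfin : ∀ t : Fin (n+1), (π t).Finite := fun t => Set.toFinite _
  have hstep : ∀ j : Fin n, (π j.succ).ncard + 1 = (π j.castSucc).ncard := by
    intro j
    have hUnotin : A j ∪ B j ∉ π j.castSucc \ {A j, B j} := by
      rintro ⟨hmem, -⟩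
      have h1 := hBlk_of j.castSucc (a j) _ hmem (Or.inl (ha j).1)
      have h2 := hBlk_of j.castSucc (a j) _ (hA j) (ha j).1
      have hEq : A j ∪ B j = A j := h1.trans h2.symm
      exact hbA j (hEq ▸ (Or.inr (hb j).1 : b j ∈ A j ∪ B j))
    have hsub : ({A j, B j} : Set (Set (Fin (n+1)))) ⊆ π j.castSucc := by
      rintro T (rfl | rfl)
      · exact hA j
      · exact hB j
    have h2le : 2 ≤ (π j.castSucc).ncard := by
      calc 2 = ({A j, B j} : Set (Set (Fin (n+1)))).ncard := (Set.ncard_pair (hAB j)).symm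
        _ ≤ (π j.castSucc).ncard := Set.ncard_le_ncard hsub (hfin _)
    have hdiff : (π j.castSucc \ {A j, B j}).ncard = (π j.castSucc).ncard - 2 := by
      rw [Set.ncard_diff hsub, Set.ncard_pair (hAB j)]
    have : (π j.succ).ncard = (π j.castSucc \ {A j, B j}).ncard + 1 := by
      rw [hmerge j, Set.union_singleton, Set.ncard_insert_of_notMem hUnotin]
    omega
  have htime : ∀ k : ℕ, (hk : k ≤ n) → (π ⟨k, by omega⟩).ncard + k = (π 0).ncard := by
    intro k
    induction k with
    | zero => intro _; rfl
    | succ m ih =>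
      intro hk
      have hm : m ≤ n := by omega
      have hstepm := hstep ⟨m, by omega⟩
      have e1 : (Fin.castSucc ⟨m, by omega⟩ : Fin (n+1)) = ⟨m, by omega⟩ := rfl
      have e2 : (Fin.succ ⟨m, by omega⟩ : Fin (n+1)) = ⟨m + 1, by omega⟩ := rfl
      rw [e1, e2] at hstepm
      have := ih hm
      omega
  have hcard0le : (π 0).ncard ≤ n + 1 := by
    have hsub : π 0 ⊆ Blk 0 '' Set.univ := by
      intro T hT
      have hTne : T.Nonempty := by
        rcases Set.eq_empty_or_nonempty T with rfl | h
        · exact absurd hT (hpart 0).1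
        · exact h
      obtain ⟨x, hx⟩ := hTne
      exact ⟨x, Set.mem_univ x, (hBlk_of 0 x T hT hx).symm⟩
    calc (π 0).ncard ≤ (Blk 0 '' Set.univ).ncard := Set.ncard_le_ncard hsub (Set.toFinite _)
      _ ≤ (Set.univ : Set (Fin (n+1))).ncard := Set.ncard_image_le
      _ = n + 1 := by simp [Set.ncard_univ]
  have hlastfin : (π (Fin.last n)).ncard + n = (π 0).ncard := by
    have := htime n le_rfl
    have e : (⟨n, by omega⟩ : Fin (n+1)) = Fin.last n := rfl
    rwa [e] at this
  have hlastpos : 1 ≤ (π (Fin.last n)).ncard :=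
    (Set.ncard_pos (hfin _)).2 ⟨Blk (Fin.last n) 0, hBlkmem _ 0⟩
  have hcard0 : (π 0).ncard = n + 1 := by omega
  have hlast1 : (π (Fin.last n)).ncard = 1 := by omega
  -- `π 0` is the partition into singletons
  have hM0 : ∀ x : Fin (n+1), M 0 x = (x : ℕ) := by
    have hinj : ∀ u v : Fin (n+1), u ∈ Blk 0 v → u = v := by
      intro u v hu
      by_contra hne
      have hE : Blk 0 v = Blk 0 u := hBlk_of 0 u _ (hBlkmem 0 v) hu
      have hsub : π 0 ⊆ Blk 0 '' (Set.univ \ {u}) := by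
        intro T hT
        have hTne : T.Nonempty := by
          rcases Set.eq_empty_or_nonempty T with rfl | h
          · exact absurd hT (hpart 0).1
          · exact h
        obtain ⟨x, hx⟩ := hTne
        rcases eq_or_ne x u with rfl | hxu
        · exact ⟨v, ⟨Set.mem_univ v, fun h => hne (h.symm ▸ rfl)⟩,
            hE.trans (hBlk_of 0 x T hT hx).symm⟩
        · exact ⟨x, ⟨Set.mem_univ x, hxu⟩, (hBlk_of 0 x T hT hx).symm⟩
      have hle : (π 0).ncard ≤ n := by
        calc (π 0).ncard ≤ (Blk 0 '' (Set.univ \ {u})).ncard :=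
              Set.ncard_le_ncard hsub (Set.toFinite _)
          _ ≤ (Set.univ \ {u} : Set (Fin (n+1))).ncard := Set.ncard_image_le
          _ = n := by
              rw [Set.ncard_diff (by simp), Set.ncard_singleton, Set.ncard_univ]
              simp
      omega
    intro x
    obtain ⟨y, hy, hyv⟩ := hMmem 0 x
    rw [← hyv, hinj y x hy]
  -- `π (last)` is the one-block partition; the min of every block there is 0
  have hMlast : ∀ x : Fin (n+1), M (Fin.last n) x = 0 := by
    obtain ⟨T, hT⟩ := Set.ncard_eq_one.1 hlast1
    intro x
    have h1 : Blk (Fin.last n) x = T := by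
      have := hBlkmem (Fin.last n) x
      rw [hT] at this
      exact this
    have h2 : Blk (Fin.last n) 0 = T := by
      have := hBlkmem (Fin.last n) (0 : Fin (n+1))
      rw [hT] at this
      exact this
    have h0 : (0 : Fin (n+1)) ∈ Blk (Fin.last n) x := by
      rw [h1, ← h2]; exact hxBlk _ _
    have := hMle (Fin.last n) x 0 h0
    simpa using this
  -- KEY LEMMA: for every threshold 1 ≤ w ≤ x there is a step j with a j < w ≤ b j ≤ x
  have hK0 : ∀ (w : ℕ) (x : Fin (n+1)), 1 ≤ w → w ≤ (x : ℕ) →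
      ∃ j : Fin n, (a j : ℕ) < w ∧ w ≤ (b j : ℕ) ∧ (b j : ℕ) ≤ (x : ℕ) := by
    intro w x hw hwx
    set D : Finset (Fin n) := Finset.univ.filter (fun j => M j.succ x < w) with hD
    have hne : D.Nonempty := by
      refine ⟨⟨n - 1, by omega⟩, ?_⟩
      have hsucc : (Fin.succ ⟨n - 1, by omega⟩ : Fin (n+1)) = Fin.last n := by
        apply Fin.ext
        simp [Fin.val_succ]
        omega
      simp only [hD, Finset.mem_filter, Finset.mem_univ, true_and, hsucc, hMlast x]
      omega
    set j₁ := D.min' hne with hj₁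
    have hj₁D : j₁ ∈ D := D.min'_mem hne
    have h1 : M j₁.succ x < w := by
      simpa only [hD, Finset.mem_filter, Finset.mem_univ, true_and] using hj₁D
    have h2 : w ≤ M j₁.castSucc x := by
      by_contra h
      push_neg at h
      rcases Nat.eq_zero_or_pos j₁.val with h0 | h0
      · have e : (Fin.castSucc j₁ : Fin (n+1)) = 0 := Fin.ext (by simpa using h0)
        rw [e, hM0 x] at h
        omega
      · set j' : Fin n := ⟨j₁.val - 1, by omega⟩ with hj'
        have hsucc : (Fin.succ j' : Fin (n+1)) = Fin.castSucc j₁ := by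
          apply Fin.ext
          simp [hj', Fin.val_succ]
          omega
        have hj'D : j' ∈ D := by
          simp only [hD, Finset.mem_filter, Finset.mem_univ, true_and, hsucc]
          exact h
        have hle := D.min'_le j' hj'D
        rw [← hj₁] at hle
        have : (j₁ : ℕ) ≤ (j' : ℕ) := hle
        simp [hj'] at this
        omega
    have hxAB : x ∈ A j₁ ∨ x ∈ B j₁ := by
      by_contra hcon
      push_neg at hcon
      rw [hMout j₁ x hcon.1 hcon.2] at h1
      omega
    rcases hxAB with hxA | hxB
    · exfalso
      have e1 := hMA j₁ x hxA
      have e2 := hMsuccAB j₁ x (Or.inl hxA)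
      omega
    · have e1 := hMB j₁ x hxB
      have e2 := hMsuccAB j₁ x (Or.inr hxB)
      have hbx : (b j₁ : ℕ) ≤ (x : ℕ) := (hb j₁).2 hxB
      exact ⟨j₁, by omega, by omega, hbx⟩
    -- conclude
  have hglt : ∀ j : Fin n, (g j : ℕ) < (b j : ℕ) := fun j => (hg j).1.2
  constructor
  · intro j
    simp only [Finset.mem_Icc]
    have h1 := hglt j
    have h2 : (b j : ℕ) ≤ n := Fin.is_le (b j)
    exact ⟨by omega, by omega⟩
  · intro i hi
    rw [Finset.mem_Icc] at hi
    obtain ⟨hi1, hi2⟩ := hi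
    -- for each 1 ≤ v ≤ n there is a step whose b-value equals v
    have hK1 : ∀ v : ℕ, ∃ j : Fin n, 1 ≤ v → v ≤ n → (b j : ℕ) = v := by
      intro v
      by_cases h : 1 ≤ v ∧ v ≤ n
      · obtain ⟨j, h1, h2, h3⟩ := hK0 v ⟨v, by omega⟩ h.1 (by simp)
        refine ⟨j, fun _ _ => ?_⟩
        simp only at h3
        omega
      · exact ⟨⟨0, hn⟩, fun hh1 hh2 => absurd ⟨hh1, hh2⟩ h⟩
    choose J hJ using hK1
    -- mixed step with minimal b-value
    set Mx : Finset (Fin n) :=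
      Finset.univ.filter (fun j => (a j : ℕ) < i ∧ i ≤ (b j : ℕ)) with hMx
    have hMxne : Mx.Nonempty := by
      obtain ⟨j, h1, h2, _⟩ := hK0 i ⟨i, by omega⟩ hi1 (by simp)
      exact ⟨j, by simp only [hMx, Finset.mem_filter, Finset.mem_univ, true_and]; exact ⟨h1, h2⟩⟩
    obtain ⟨j₀, hj₀Mx, hj₀min⟩ := Mx.exists_min_image (fun j => (b j : ℕ)) hMxne
    have hj₀ : (a j₀ : ℕ) < i ∧ i ≤ (b j₀ : ℕ) := by
      simpa only [hMx, Finset.mem_filter, Finset.mem_univ, true_and] using hj₀Mx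
    have hg0 : (g j₀ : ℕ) < i := by
      by_contra h
      push_neg at h
      obtain ⟨j', h1, h2, h3⟩ := hK0 i (g j₀) hi1 h
      have hj'Mx : j' ∈ Mx := by
        simp only [hMx, Finset.mem_filter, Finset.mem_univ, true_and]
        exact ⟨h1, h2⟩
      have := hj₀min j' hj'Mx
      have := hglt j₀
      omega
    -- the injection from {1, …, i}
    set f : ℕ → Fin n := fun v => if v = i then j₀ else J v with hf
    have hmaps : ∀ v ∈ Finset.Icc 1 i, f v ∈ Finset.univ.filter
        (fun j => (fun j : Fin n => (g j : ℕ) + 1) j ≤ i) := by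
      intro v hv
      rw [Finset.mem_Icc] at hv
      simp only [Finset.mem_filter, Finset.mem_univ, true_and]
      by_cases hvi : v = i
      · simp only [hf, hvi, if_pos rfl]
        omega
      · simp only [hf, if_neg hvi]
        have hv2 : v ≤ n := by omega
        have hbv := hJ v hv.1 hv2
        have := hglt (J v)
        omega
    have hinjOn : Set.InjOn f ↑(Finset.Icc 1 i) := by
      intro v hv v' hv' hEq
      rw [Finset.coe_Icc, Set.mem_Icc] at hv hv'
      by_cases h1 : v = i <;> by_cases h2 : v' = i
      · omega
      · exfalso
        have hbv' := hJ v' hv'.1 (by omega)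
        simp only [hf, if_pos h1, if_neg h2] at hEq
        rw [hEq] at hj₀
        omega
      · exfalso
        have hbv := hJ v hv.1 (by omega)
        simp only [hf, if_neg h1, if_pos h2] at hEq
        rw [← hEq] at hj₀
        omega
      · have hbv := hJ v hv.1 (by omega)
        have hbv' := hJ v' hv'.1 (by omega)
        simp only [hf, if_neg h1, if_neg h2] at hEq
        rw [hEq] at hbv
        omega
    calc i = (Finset.Icc 1 i).card := by rw [Nat.card_Icc]; omega
      _ ≤ _ := Finset.card_le_card_of_injOn f hmaps hinjOn
end

section
/- For every positive integer n and every k ∈ {1, …, n}, any rearrangement of the sequence α^{(k)} = (1, …, 1, k+1, k+2, …, n) (with k ones) is a parking function of length n; moreover, if α is such a rearrangement and α_i > 1 for some index i, then the sequence obtained from α by replacing α_i with α_i + 1 is not a parking function of length n. -/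
/-- The sequence `α⁽ᵏ⁾ = (1, …, 1, k+1, k+2, …, n)` with `k` ones (indexed by `Fin n`,
so position `i` holds `1` if `i < k` and `i + 1` otherwise). -/
def alphaK (n k : ℕ) : Fin n → ℕ := fun i => if (i : ℕ) < k then 1 else (i : ℕ) + 1

lemma card_val_lt (n t : ℕ) (h : t ≤ n) :
    (Finset.univ.filter fun i : Fin n => (i : ℕ) < t).card = t := by
  have heq : (Finset.univ.filter fun i : Fin n => (i : ℕ) < t) =
      (Finset.range t).attachFin (fun m hm => lt_of_lt_of_le (Finset.mem_range.mp hm) h) := by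
    ext i
    simp [Finset.mem_attachFin]
  rw [heq, Finset.card_attachFin, Finset.card_range]

lemma card_perm {n : ℕ} (σ : Equiv.Perm (Fin n)) (p : Fin n → Prop) [DecidablePred p] :
    (Finset.univ.filter fun j => p (σ j)).card = (Finset.univ.filter p).card := by
  have heq : (Finset.univ.filter fun j => p (σ j)) =
      (Finset.univ.filter p).map σ.symm.toEmbedding := by
    ext j
    simp [Equiv.symm_apply_eq, eq_comm]
  rw [heq, Finset.card_map]

lemma count_alpha (n k m : ℕ) (hk : k ≤ n) (hm1 : 1 ≤ m) (hmn : m ≤ n) :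
    (Finset.univ.filter fun i : Fin n => alphaK n k i ≤ m).card = max k m := by
  have heq : (Finset.univ.filter fun i : Fin n => alphaK n k i ≤ m) =
      (Finset.univ.filter fun i : Fin n => (i : ℕ) < max k m) := by
    ext i
    simp only [Finset.mem_filter, Finset.mem_univ, true_and]
    simp only [alphaK]
    split <;> omega
  rw [heq, card_val_lt n (max k m) (by omega)]

/-- For every positive integer `n` and every `k ∈ {1, …, n}`, any
rearrangement of `α⁽ᵏ⁾` is a parking function of length `n`; moreover, if `α` is such a
rearrangement and `α i > 1`, then replacing `α i` by `α i + 1` yields a sequence that is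
not a parking function of length `n`. -/
theorem alphaK_rearrangement_vertex (n k : ℕ) (hn : 0 < n) (hk : k ∈ Finset.Icc 1 n)
    (σ : Equiv.Perm (Fin n)) :
    IsParkingFunction n (fun i => alphaK n k (σ i)) ∧
      ∀ i : Fin n, 1 < alphaK n k (σ i) →
        ¬ IsParkingFunction n
          (Function.update (fun i => alphaK n k (σ i)) i (alphaK n k (σ i) + 1)) := by
  rw [Finset.mem_Icc] at hk
  have key : ∀ m, 1 ≤ m → m ≤ n →
      (Finset.univ.filter fun j => alphaK n k (σ j) ≤ m).card = max k m := by
    intro m hm1 hmn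
    rw [card_perm σ (fun i => alphaK n k i ≤ m), count_alpha n k m hk.2 hm1 hmn]
  constructor
  · refine ⟨fun j => ?_, fun m hm => ?_⟩
    · have := (σ j).isLt
      simp only [alphaK, Finset.mem_Icc]
      split <;> omega
    · rw [Finset.mem_Icc] at hm
      rw [key m hm.1 hm.2]
      omega
  · intro i hi hpark
    have hσk : ¬ ((σ i : ℕ) < k) := by
      intro h
      simp [alphaK, h] at hi
    have hv : alphaK n k (σ i) = (σ i : ℕ) + 1 := by simp [alphaK, hσk]
    set v : ℕ := (σ i : ℕ) + 1 with hvdef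
    have hvn : v ≤ n := (σ i).isLt
    obtain ⟨_, hcount⟩ := hpark
    have h1 := hcount v (Finset.mem_Icc.mpr ⟨by omega, hvn⟩)
    have heq : (Finset.univ.filter fun j =>
          Function.update (fun i => alphaK n k (σ i)) i (alphaK n k (σ i) + 1) j ≤ v)
        = (Finset.univ.filter fun j => alphaK n k (σ j) ≤ v).erase i := by
      ext j
      by_cases hj : j = i
      · subst hj
        simp [Function.update_self, hv]
      · simp [Function.update_of_ne hj, hj]
    rw [heq, Finset.card_erase_of_mem (by simp [hv]), key v (by omega) hvn] at h1
    have hmax : max k v = v := max_eq_right (by omega)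
    omega
end

section
/- Let n be a positive integer and let α be a parking function of length n that is not a rearrangement of α^{(k)} for any k ∈ {1, …, n}. Then there exists an index i with α_i > 1 such that the sequence obtained from α by replacing α_i with α_i + 1 is again a parking function of length n. -/
theorem countP_eq_sum' {β : Type*} (p : β → Bool) (l : List β) :
    l.countP p = (l.map fun x => if p x then 1 else 0).sum := by
  induction l with
  | nil => simp
  | cons x xs ih => rw [List.countP_cons]; simp [ih]; split <;> omega

theorem count_ofFn' {n : ℕ} (f : Fin n → ℕ) (a : ℕ) :
    (List.ofFn f).count a = (Finset.univ.filter fun i => f i = a).card := by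
  rw [List.ofFn_eq_map, List.count_eq_countP, List.countP_map]
  rw [Finset.card_filter, Fin.sum_univ_def, countP_eq_sum']
  congr 1
  apply List.map_congr_left
  intro i _
  simp

theorem exists_comp_perm' {n : ℕ} {f g : Fin n → ℕ}
    (h : ∀ a : ℕ, (Finset.univ.filter fun i => f i = a).card
      = (Finset.univ.filter fun i => g i = a).card) :
    ∃ σ : Equiv.Perm (Fin n), f = fun i => g (σ i) := by
  have hperm : (List.ofFn f).Perm (List.ofFn g) := by
    rw [List.perm_iff_count]
    intro a
    rw [count_ofFn', count_ofFn', h]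
  have h1 : List.ofFn (f ∘ Tuple.sort f) = List.ofFn (g ∘ Tuple.sort g) :=
    List.Perm.eq_of_sortedLE
      (Tuple.monotone_sort f).sortedLE_ofFn (Tuple.monotone_sort g).sortedLE_ofFn
      (((Tuple.sort f).ofFn_comp_perm f).trans
        (hperm.trans ((Tuple.sort g).ofFn_comp_perm g).symm))
  have h2 : f ∘ Tuple.sort f = g ∘ Tuple.sort g := List.ofFn_injective h1
  refine ⟨(Tuple.sort f).symm.trans (Tuple.sort g), funext fun i => ?_⟩
  have := congrFun h2 ((Tuple.sort f).symm i)
  simpa using this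

theorem card_filter_coe_lt' {n m : ℕ} (h : m ≤ n) :
    ((Finset.univ : Finset (Fin n)).filter fun i : Fin n => (i : ℕ) < m).card = m := by
  rw [← Fintype.card_subtype]
  exact Fintype.card_fin_lt_of_le h

theorem filter_le_succ_card' {n : ℕ} (f : Fin n → ℕ) (a : ℕ) :
    (Finset.univ.filter fun j => f j ≤ a + 1).card
      = (Finset.univ.filter fun j => f j ≤ a).card
        + (Finset.univ.filter fun j => f j = a + 1).card := by
  rw [← Finset.card_union_of_disjoint (by
    rw [Finset.disjoint_left]; intro x hx hy
    simp only [Finset.mem_filter, Finset.mem_univ, true_and] at hx hy; omega)]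
  congr 1
  ext j
  simp only [Finset.mem_filter, Finset.mem_union, Finset.mem_univ, true_and]
  omega



/-- If `α` is a parking function of length `n` that is not a rearrangement
of `α⁽ᵏ⁾` for any `k ∈ {1, …, n}`, then there is an index `i` with `α i > 1` such that
replacing `α i` by `α i + 1` again yields a parking function of length `n`. -/
theorem non_vertex_parkingFunction_increment (n : ℕ) (hn : 0 < n) (α : Fin n → ℕ)
    (hα : IsParkingFunction n α)
    (hnv : ¬ ∃ k ∈ Finset.Icc 1 n, ∃ σ : Equiv.Perm (Fin n),
      α = fun i => alphaK n k (σ i)) :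
    ∃ i : Fin n, 1 < α i ∧
      IsParkingFunction n (Function.update α i (α i + 1)) := by
  by_contra hcon
  push_neg at hcon
  obtain ⟨hmem, hcard⟩ := hα
  have hmem1 : ∀ j, 1 ≤ α j := fun j => (Finset.mem_Icc.mp (hmem j)).1
  have hmemn : ∀ j, α j ≤ n := fun j => (Finset.mem_Icc.mp (hmem j)).2
  have hcard' : ∀ t, 1 ≤ t → t ≤ n →
      t ≤ (Finset.univ.filter fun j => α j ≤ t).card :=
    fun t h1 h2 => hcard t (Finset.mem_Icc.mpr ⟨h1, h2⟩)
  have hcmono : ∀ s t : ℕ, s ≤ t →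
      (Finset.univ.filter fun j => α j ≤ s).card
        ≤ (Finset.univ.filter fun j => α j ≤ t).card := by
    intro s t hst
    apply Finset.card_le_card
    apply Finset.monotone_filter_right
    intro j hj
    omega
  -- no valid increment exists, so counts at attained values < n are tight
  have hup : ∀ i : Fin n, 1 < α i → α i < n →
      (Finset.univ.filter fun j => α j ≤ α i).card = α i := by
    intro i h1 h2
    by_contra hne
    have hgt : α i < (Finset.univ.filter fun j => α j ≤ α i).card :=
      lt_of_le_of_ne (hcard' _ (by omega) (by omega)) (Ne.symm hne)
    apply hcon i h1
    constructor
    · intro j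
      rcases eq_or_ne j i with rfl | hji
      · rw [Function.update_self]; exact Finset.mem_Icc.mpr ⟨by omega, by omega⟩
      · rw [Function.update_of_ne hji]; exact hmem j
    · intro t ht
      rw [Finset.mem_Icc] at ht
      rcases eq_or_ne t (α i) with rfl | hta
      · have hsub : (Finset.univ.filter fun j => α j ≤ α i)
            ⊆ insert i (Finset.univ.filter fun j =>
              Function.update α i (α i + 1) j ≤ α i) := by
          intro j hj
          rcases eq_or_ne j i with rfl | hji
          · exact Finset.mem_insert_self _ _
          · apply Finset.mem_insert_of_mem
            simp only [Finset.mem_filter, Finset.mem_univ, true_and] at hj ⊢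
            rwa [Function.update_of_ne hji]
        have hle := Finset.card_le_card hsub
        have hins := Finset.card_insert_le i (Finset.univ.filter fun j =>
          Function.update α i (α i + 1) j ≤ α i)
        omega
      · have hfe : (Finset.univ.filter fun j => Function.update α i (α i + 1) j ≤ t)
            = Finset.univ.filter fun j => α j ≤ t := by
          apply Finset.filter_congr
          intro j _
          rcases eq_or_ne j i with rfl | hji
          · rw [Function.update_self]; omega
          · rw [Function.update_of_ne hji]
        rw [hfe]
        exact hcard t (Finset.mem_Icc.mpr ht)
  obtain ⟨k, hk⟩ : ∃ k, k = (Finset.univ.filter fun j => α j ≤ 1).card := ⟨_, rfl⟩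
  have hk1 : 1 ≤ k := by have := hcard' 1 le_rfl hn; omega
  have hkn : k ≤ n := by
    have : (Finset.univ.filter fun j => α j ≤ 1).card ≤ (Finset.univ : Finset (Fin n)).card :=
      Finset.card_filter_le _ _
    simpa [hk] using this.trans (by simp)
  have hcn : (Finset.univ.filter fun j => α j ≤ n).card = n := by
    have hfe : (Finset.univ.filter fun j => α j ≤ n) = Finset.univ :=
      Finset.filter_true_of_mem fun j _ => hmemn j
    rw [hfe]; simp
  have hC : ∀ t, 1 ≤ t → t ≤ n →
      (Finset.univ.filter fun j => α j ≤ t).card = max k t := by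
    intro t h1
    induction t, h1 using Nat.le_induction with
    | base => intro _; omega
    | succ t ht ih =>
      intro hsn
      have hct := ih (by omega)
      have hge1 := hcard' (t + 1) (by omega) hsn
      have hgek := hcmono t (t + 1) (by omega)
      rcases eq_or_lt_of_le hsn with heq | hlt
      · rw [heq]; omega
      · by_cases hex : ∃ i, α i = t + 1
        · obtain ⟨i, hi⟩ := hex
          have htight := hup i (by omega) (by omega)
          rw [hi] at htight
          omega
        · push_neg at hex
          have hfe : (Finset.univ.filter fun j => α j ≤ t + 1)
              = Finset.univ.filter fun j => α j ≤ t := by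
            apply Finset.filter_congr
            intro j _
            have := hex j
            omega
          have hcc := congrArg Finset.card hfe
          omega
  have hBc : ∀ t, 1 ≤ t → t ≤ n →
      (Finset.univ.filter fun j => alphaK n k j ≤ t).card = max k t := by
    intro t h1 h2
    have hfe : (Finset.univ.filter fun j => alphaK n k j ≤ t)
        = Finset.univ.filter fun j : Fin n => (j : ℕ) < max k t := by
      apply Finset.filter_congr
      intro j _
      have hj := j.isLt
      by_cases hjk : (j : ℕ) < k
      · simp only [alphaK, if_pos hjk]; omega
      · simp only [alphaK, if_neg hjk]; omega
    rw [hfe, card_filter_coe_lt' (max_le hkn h2)]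
  have hbmem1 : ∀ j : Fin n, 1 ≤ alphaK n k j := by
    intro j
    simp only [alphaK]
    split <;> omega
  have hbmemn : ∀ j : Fin n, alphaK n k j ≤ n := by
    intro j
    have hj := j.isLt
    simp only [alphaK]
    split <;> omega
  have hkey : ∀ a : ℕ, (Finset.univ.filter fun j => α j ≤ a).card
      = (Finset.univ.filter fun j => alphaK n k j ≤ a).card := by
    intro a
    rcases Nat.eq_zero_or_pos a with rfl | ha
    · have e1 : (Finset.univ.filter fun j => α j ≤ 0) = ∅ :=
        Finset.filter_false_of_mem fun j _ => by have := hmem1 j; omega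
      have e2 : (Finset.univ.filter fun j : Fin n => alphaK n k j ≤ 0) = ∅ :=
        Finset.filter_false_of_mem fun j _ => by have := hbmem1 j; omega
      rw [e1, e2]
    · rcases le_or_gt a n with han | hna
      · rw [hC a ha han, hBc a ha han]
      · have e1 : (Finset.univ.filter fun j => α j ≤ a) = Finset.univ :=
          Finset.filter_true_of_mem fun j _ => by have := hmemn j; omega
        have e2 : (Finset.univ.filter fun j : Fin n => alphaK n k j ≤ a) = Finset.univ :=
          Finset.filter_true_of_mem fun j _ => by have := hbmemn j; omega
        rw [e1, e2]
  have hval : ∀ a : ℕ, (Finset.univ.filter fun i => α i = a).card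
      = (Finset.univ.filter fun i => alphaK n k i = a).card := by
    intro a
    match a with
    | 0 =>
      have e1 : (Finset.univ.filter fun j => α j = 0) = ∅ :=
        Finset.filter_false_of_mem fun j _ => by have := hmem1 j; omega
      have e2 : (Finset.univ.filter fun j : Fin n => alphaK n k j = 0) = ∅ :=
        Finset.filter_false_of_mem fun j _ => by have := hbmem1 j; omega
      rw [e1, e2]
    | a + 1 =>
      have h1 := filter_le_succ_card' α a
      have h2 := filter_le_succ_card' (alphaK n k) a
      have h3 := hkey a
      have h4 := hkey (a + 1)
      omega
  obtain ⟨σ, hσ⟩ := exists_comp_perm' hval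
  exact hnv ⟨k, Finset.mem_Icc.mpr ⟨hk1, hkn⟩, σ, hσ⟩
end

section
/- For every positive integer n, a point v = (v_1, …, v_n) ∈ ℝ^n is an extreme point of the parking function polytope 𝒫F_n if and only if v is a rearrangement of the sequence α^{(k)} = (1, …, 1, k+1, k+2, …, n) (with k ones) for some k ∈ {1, …, n}. -/
/-- The set of parking functions of length `n`, regarded as points of `ℝⁿ`. -/
def parkingFunctionPoints (n : ℕ) : Set (Fin n → ℝ) :=
  {x | ∃ α : Fin n → ℕ, IsParkingFunction n α ∧ x = fun i => (α i : ℝ)}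

/-- The parking function polytope `𝒫F_n ⊆ ℝⁿ`, the convex hull of the set of all
parking functions of length `n`. -/
def parkingFunctionPolytope (n : ℕ) : Set (Fin n → ℝ) :=
  convexHull ℝ (parkingFunctionPoints n)

open Finset

lemma finite_pfp (n : ℕ) : (parkingFunctionPoints n).Finite := by
  have : parkingFunctionPoints n ⊆
      (fun α : Fin n → ℕ => fun i => (α i : ℝ)) '' (Set.pi Set.univ fun _ => Set.Icc 1 n) := by
    rintro x ⟨α, hα, rfl⟩
    exact ⟨α, fun j _ => by simpa using hα.1 j, rfl⟩
  exact Set.Finite.subset (Set.Finite.image _ (Set.Finite.pi fun _ => Set.finite_Icc _ _)) this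

lemma count_comp_perm (α : Fin n → ℕ) (σ : Equiv.Perm (Fin n)) (i : ℕ) :
    (Finset.univ.filter fun j => α (σ j) ≤ i).card
      = (Finset.univ.filter fun j => α j ≤ i).card := by
  apply Finset.card_bij (fun j _ => σ j)
  · intro a ha; simp only [mem_filter, mem_univ, true_and] at ha ⊢; exact ha
  · intro a _ b _ h; exact σ.injective h
  · intro b hb; exact ⟨σ.symm b, by simpa using (by simpa using hb : α b ≤ i), by simp⟩

lemma isParkingFunction_comp_perm {n : ℕ} {α : Fin n → ℕ} (h : IsParkingFunction n α)
    (σ : Equiv.Perm (Fin n)) : IsParkingFunction n (fun j => α (σ j)) := by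
  refine ⟨fun j => h.1 (σ j), fun i hi => ?_⟩
  rw [count_comp_perm]; exact h.2 i hi

lemma isParkingFunction_alphaK {n k : ℕ} (hk : k ∈ Finset.Icc 1 n) :
    IsParkingFunction n (alphaK n k) := by
  obtain ⟨hk1, hkn⟩ := Finset.mem_Icc.1 hk
  constructor
  · intro j
    simp only [alphaK, Finset.mem_Icc]
    split
    · omega
    · exact ⟨by omega, by omega⟩
  · intro i hi
    simp only [Finset.mem_Icc] at hi
    have : (Finset.univ.filter fun j : Fin n => (j : ℕ) < i) ⊆
        Finset.univ.filter fun j => alphaK n k j ≤ i := by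
      intro j hj
      simp only [mem_filter, mem_univ, true_and] at hj ⊢; rw [alphaK]
      split
      · omega
      · omega
    have hcard : (Finset.univ.filter fun j : Fin n => (j : ℕ) < i).card = i := by
      have he : (Finset.univ.filter fun j : Fin n => (j : ℕ) < i) = (Finset.range i).attachFin
          (fun m hm => lt_of_lt_of_le (Finset.mem_range.1 hm) hi.2) := by
        ext j; simp
      rw [he, Finset.card_attachFin, Finset.card_range]
    calc i = (Finset.univ.filter fun j : Fin n => (j : ℕ) < i).card := hcard.symm
      _ ≤ _ := Finset.card_le_card this

lemma parking_minus {n : ℕ} {β : Fin n → ℕ} (h : IsParkingFunction n β) {j : Fin n}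
    (hj : 2 ≤ β j) : IsParkingFunction n (Function.update β j (β j - 1)) := by
  constructor
  · intro l
    rcases eq_or_ne l j with rfl | hne
    · have := h.1 l; simp only [Function.update_self, Finset.mem_Icc] at *; omega
    · rw [Function.update_of_ne hne]; exact h.1 l
  · intro i hi
    refine le_trans (h.2 i hi) (Finset.card_le_card ?_)
    apply Finset.monotone_filter_right
    intro l hl
    rcases eq_or_ne l j with rfl | hne
    · simp only [Function.update_self]; omega
    · rw [Function.update_of_ne hne]; exact id

lemma parking_plus {n : ℕ} {β : Fin n → ℕ} (h : IsParkingFunction n β) {j : Fin n}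
    (hj : β j + 1 ≤ (Finset.univ.filter fun l => β l ≤ β j).card) :
    IsParkingFunction n (Function.update β j (β j + 1)) := by
  have hβjn : β j + 1 ≤ n :=
    le_trans hj (le_trans (Finset.card_le_card (Finset.filter_subset _ _)) (by simp))
  constructor
  · intro l
    rcases eq_or_ne l j with rfl | hne
    · have := h.1 l; simp only [Function.update_self, Finset.mem_Icc] at *; omega
    · rw [Function.update_of_ne hne]; exact h.1 l
  · intro i hi
    rcases lt_trichotomy i (β j) with hlt | heq | hgt
    · have : (Finset.univ.filter fun l => Function.update β j (β j + 1) l ≤ i)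
          = Finset.univ.filter fun l => β l ≤ i := by
        apply Finset.filter_congr
        intro l _
        rcases eq_or_ne l j with rfl | hne
        · simp only [Function.update_self]; constructor <;> intro <;> omega
        · rw [Function.update_of_ne hne]
      rw [this]; exact h.2 i hi
    · subst heq
      have hsub : (Finset.univ.filter fun l => β l ≤ β j) \ {j}
          ⊆ Finset.univ.filter fun l => Function.update β j (β j + 1) l ≤ β j := by
        intro l hl
        simp only [Finset.mem_sdiff, Finset.mem_filter, Finset.mem_univ, true_and,
          Finset.mem_singleton] at hl ⊢
        rw [Function.update_of_ne hl.2]; exact hl.1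
      have := Finset.card_le_card hsub
      have hc : ((Finset.univ.filter fun l => β l ≤ β j) \ {j}).card
          ≥ (Finset.univ.filter fun l => β l ≤ β j).card - 1 := by
        have := Finset.le_card_sdiff ({j} : Finset (Fin n)) (Finset.univ.filter fun l => β l ≤ β j)
        simp only [Finset.card_singleton] at this
        omega
      omega
    · have : (Finset.univ.filter fun l => Function.update β j (β j + 1) l ≤ i)
          = Finset.univ.filter fun l => β l ≤ i := by
        apply Finset.filter_congr
        intro l _
        rcases eq_or_ne l j with rfl | hne
        · simp only [Function.update_self]; constructor <;> intro <;> omega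
        · rw [Function.update_of_ne hne]
      rw [this]; exact h.2 i hi

lemma structure_of_rigid {n : ℕ} (hn : 0 < n) {β : Fin n → ℕ} (h : IsParkingFunction n β)
    (hr : ∀ j, 2 ≤ β j → (Finset.univ.filter fun l => β l ≤ β j).card ≤ β j) :
    ∃ k ∈ Finset.Icc 1 n, ∃ σ : Equiv.Perm (Fin n), β = fun i => alphaK n k (σ i) := by
  classical
  set O : Finset (Fin n) := Finset.univ.filter fun j => β j = 1 with hO
  set k : ℕ := O.card with hk
  have hone : ∀ j, 1 ≤ β j := fun j => (Finset.mem_Icc.1 (h.1 j)).1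
  have hlen : ∀ j, β j ≤ n := fun j => (Finset.mem_Icc.1 (h.1 j)).2
  have hk1 : 1 ≤ k := by
    have h1 := h.2 1 (Finset.mem_Icc.2 ⟨le_refl 1, hn⟩)
    have : (Finset.univ.filter fun j => β j ≤ 1) = O := by
      apply Finset.filter_congr; intro l _
      have := hone l; constructor <;> intro <;> omega
    rw [this] at h1; exact h1
  have hkn : k ≤ n := by
    calc k ≤ (Finset.univ : Finset (Fin n)).card := Finset.card_le_card (Finset.filter_subset _ _)
    _ = n := by simp
  -- tightness
  have htight : ∀ j, 2 ≤ β j → (Finset.univ.filter fun l => β l ≤ β j).card = β j := by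
    intro j hj
    have := h.2 (β j) (Finset.mem_Icc.2 ⟨hone j, hlen j⟩)
    exact le_antisymm (hr j hj) this
  -- values ≥ k+1 for non-ones
  have hbig : ∀ j, 2 ≤ β j → k + 1 ≤ β j := by
    intro j hj
    have hsub : insert j O ⊆ Finset.univ.filter fun l => β l ≤ β j := by
      intro l hl
      rcases Finset.mem_insert.1 hl with rfl | hl
      · simp
      · simp only [hO, Finset.mem_filter, Finset.mem_univ, true_and] at hl ⊢; omega
    have hjO : j ∉ O := by simp only [hO, Finset.mem_filter]; omega
    have := Finset.card_le_card hsub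
    rw [Finset.card_insert_of_notMem hjO, htight j hj] at this
    omega
  -- injectivity on non-ones
  have hinj2 : ∀ j j', 2 ≤ β j → β j = β j' → j = j' := by
    intro j j' hj hjj'
    by_contra hne
    set c := β j with hc
    have hsub : insert j (insert j' (Finset.univ.filter fun l => β l ≤ c - 1))
        ⊆ Finset.univ.filter fun l => β l ≤ c := by
      intro l hl
      simp only [Finset.mem_insert, Finset.mem_filter, Finset.mem_univ, true_and] at hl ⊢
      rcases hl with rfl | rfl | hl
      · omega
      · omega
      · omega
    have hjn : j ∉ insert j' (Finset.univ.filter fun l => β l ≤ c - 1) := by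
      simp only [Finset.mem_insert, Finset.mem_filter, Finset.mem_univ, true_and]
      push_neg; exact ⟨hne, by omega⟩
    have hj'n : j' ∉ Finset.univ.filter fun l => β l ≤ c - 1 := by
      simp only [Finset.mem_filter, Finset.mem_univ, true_and]; omega
    have hcm1 := h.2 (c - 1) (by simp only [Finset.mem_Icc]; have := hlen j; omega)
    have hcard := Finset.card_le_card hsub
    rw [Finset.card_insert_of_notMem hjn, Finset.card_insert_of_notMem hj'n,
      htight j hj] at hcard
    omega
  -- the rank equivalence on ones
  have hOk : O.card = k := rfl
  let e := O.orderIsoOfFin hOk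
  -- the permutation
  have hlt : ∀ j : Fin n, j ∉ O → β j - 1 < n := by
    intro j hj; have := hlen j; omega
  let τ : Fin n → Fin n := fun j =>
    if hj : j ∈ O then Fin.castLE hkn (e.symm ⟨j, hj⟩) else ⟨β j - 1, hlt j hj⟩
  have hτval_one : ∀ j (hj : j ∈ O), (τ j : ℕ) < k := by
    intro j hj
    simp only [τ, dif_pos hj, Fin.coe_castLE]
    exact (e.symm ⟨j, hj⟩).isLt
  have hmemO : ∀ j, j ∈ O ↔ β j = 1 := by
    intro j; simp [hO]
  have hτval_big : ∀ j (hj : j ∉ O), (τ j : ℕ) = β j - 1 ∧ k ≤ (τ j : ℕ) := by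
    intro j hj
    have h2 : 2 ≤ β j := by have := hone j; have : β j ≠ 1 := fun h' => hj ((hmemO j).2 h'); omega
    constructor
    · simp only [τ, dif_neg hj]
    · simp only [τ, dif_neg hj]; have := hbig j h2; omega
  have hτinj : Function.Injective τ := by
    intro a b hab
    by_cases ha : a ∈ O <;> by_cases hb : b ∈ O
    · simp only [τ, dif_pos ha, dif_pos hb] at hab
      have := Fin.castLE_injective hkn hab
      have := e.symm.injective this
      exact Subtype.ext_iff.1 this
    · have h1 := hτval_one a ha
      have h2 := (hτval_big b hb).2
      rw [hab] at h1; omega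
    · have h1 := hτval_one b hb
      have h2 := (hτval_big a ha).2
      rw [hab] at h2; omega
    · have ha2 : 2 ≤ β a := by have := hone a; have : β a ≠ 1 := fun h' => ha ((hmemO a).2 h'); omega
      have hb2 : 2 ≤ β b := by have := hone b; have : β b ≠ 1 := fun h' => hb ((hmemO b).2 h'); omega
      have h1 := (hτval_big a ha).1
      have h2 := (hτval_big b hb).1
      apply hinj2 a b ha2
      have : (τ a : ℕ) = (τ b : ℕ) := by rw [hab]
      omega
  let σ : Equiv.Perm (Fin n) := Equiv.ofBijective τ (Finite.injective_iff_bijective.1 hτinj)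
  refine ⟨k, Finset.mem_Icc.2 ⟨hk1, hkn⟩, σ, ?_⟩
  funext j
  show β j = alphaK n k (τ j)
  by_cases hj : j ∈ O
  · rw [alphaK, if_pos (hτval_one j hj)]
    exact (hmemO j).1 hj
  · have h1 := (hτval_big j hj).1
    have h2 := (hτval_big j hj).2
    have h2' : 2 ≤ β j := by have := hone j; have : β j ≠ 1 := fun h' => hj ((hmemO j).2 h'); omega
    rw [alphaK, if_neg (by omega)]
    omega

lemma sum_range_two_pow (d : ℕ) : ∑ m ∈ Finset.range d, 2 ^ m = 2 ^ d - 1 := by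
  induction d with
  | zero => simp
  | succ d ih =>
    rw [Finset.sum_range_succ, ih]
    have : 1 ≤ 2 ^ d := Nat.one_le_two_pow
    have : (2:ℕ) ^ (d+1) = 2 * 2^d := by ring
    omega

lemma card_filter_lt (n i : ℕ) (h : i ≤ n) :
    (Finset.univ.filter fun j : Fin n => (j : ℕ) < i).card = i := by
  have he : (Finset.univ.filter fun j : Fin n => (j : ℕ) < i) = (Finset.range i).attachFin
      (fun m hm => lt_of_lt_of_le (Finset.mem_range.1 hm) h) := by
    ext j; simp
  rw [he, Finset.card_attachFin, Finset.card_range]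

lemma card_filter_ge (n d : ℕ) (h : d ≤ n) :
    (Finset.univ.filter fun j : Fin n => d ≤ (j : ℕ)).card = n - d := by
  have := Finset.card_filter_add_card_filter_not
    (s := (Finset.univ : Finset (Fin n))) (p := fun j : Fin n => (j : ℕ) < d)
  simp only [not_lt] at this
  rw [card_filter_lt n d h] at this
  simp only [Finset.card_univ, Fintype.card_fin] at this
  omega

/-- Key subset power-sum bound. -/
lemma pow_sum_strict {n : ℕ} (k d : ℕ) (S : Finset (Fin n))
    (hS1 : ∀ i ∈ S, k ≤ (i : ℕ)) (hS2 : S.card + d ≤ n)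
    (hne : S ≠ Finset.univ.filter fun i : Fin n => max k d ≤ (i : ℕ)) :
    ∑ i ∈ S, 2 ^ (i : ℕ) < ∑ i ∈ (Finset.univ.filter fun i : Fin n => max k d ≤ (i : ℕ)),
      2 ^ (i : ℕ) := by
  set T := Finset.univ.filter fun i : Fin n => max k d ≤ (i : ℕ) with hT
  by_cases hsub : S ⊆ T
  · have hss : S ⊂ T := ssubset_of_ne_of_subset hne hsub
    obtain ⟨j, hjT, hjS⟩ := Finset.exists_of_ssubset hss
    exact Finset.sum_lt_sum_of_subset hsub hjT hjS (by positivity) (fun _ _ _ => by positivity)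
  · obtain ⟨i₀, hi₀S, hi₀T⟩ := Finset.not_subset.1 hsub
    have hi₀k : k ≤ (i₀ : ℕ) := hS1 i₀ hi₀S
    have hi₀d : (i₀ : ℕ) < d := by
      simp only [hT, Finset.mem_filter, Finset.mem_univ, true_and, max_le_iff, not_and,
        not_le] at hi₀T
      exact hi₀T hi₀k
    have hmax : max k d = d := by omega
    have hdn : d ≤ n := by
      have := hi₀d; have := i₀.isLt; omega
    have hTcard : T.card = n - d := by
      rw [hT, hmax]; exact card_filter_ge n d hdn
    have hScard : 1 ≤ S.card := Finset.card_pos.2 ⟨i₀, hi₀S⟩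
    have hSTcard : (S ∩ T).card < T.card := by
      have h1 : (S ∩ T).card ≤ S.card - 1 := by
        have : (S ∩ T).card < S.card := by
          apply Finset.card_lt_card
          constructor
          · exact Finset.inter_subset_left
          · intro hc
            exact hi₀T (Finset.mem_inter.1 (hc hi₀S)).2
        omega
      omega
    have hTnotsub : ¬ T ⊆ S ∩ T := fun hc => absurd (Finset.card_le_card hc) (not_le.2 hSTcard)
    obtain ⟨j, hjT, hjST⟩ := Finset.not_subset.1 hTnotsub
    have hjd : d ≤ (j : ℕ) := by
      simp only [hT, hmax, Finset.mem_filter, Finset.mem_univ, true_and] at hjT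
      exact hjT
    -- sum splits
    have hsplit : ∑ i ∈ S, 2 ^ (i : ℕ)
        = ∑ i ∈ S ∩ T, 2 ^ (i : ℕ) + ∑ i ∈ S \ T, 2 ^ (i : ℕ) :=
      (Finset.sum_inter_add_sum_sdiff S T _).symm
    have hA : ∑ i ∈ S ∩ T, 2 ^ (i : ℕ) + 2 ^ (j : ℕ) ≤ ∑ i ∈ T, 2 ^ (i : ℕ) := by
      have h1 : S ∩ T ⊆ T.erase j := by
        intro l hl
        rw [Finset.mem_erase]
        exact ⟨fun hlj => hjST (hlj ▸ hl), (Finset.mem_inter.1 hl).2⟩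
      have h2 : ∑ i ∈ S ∩ T, 2 ^ (i : ℕ) ≤ ∑ i ∈ T.erase j, 2 ^ (i : ℕ) :=
        Finset.sum_le_sum_of_subset h1
      have h3 : 2 ^ (j : ℕ) + ∑ i ∈ T.erase j, 2 ^ (i : ℕ) = ∑ i ∈ T, 2 ^ (i : ℕ) :=
        Finset.add_sum_erase T (fun i : Fin n => 2 ^ (i : ℕ)) hjT
      omega
    have hB : ∑ i ∈ S \ T, 2 ^ (i : ℕ) < 2 ^ d := by
      have h1 : ∀ i ∈ S \ T, (i : ℕ) < d := by
        intro i hi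
        obtain ⟨hiS, hiT⟩ := Finset.mem_sdiff.1 hi
        simp only [hT, hmax, Finset.mem_filter, Finset.mem_univ, true_and, not_le] at hiT
        exact hiT
      calc ∑ i ∈ S \ T, 2 ^ (i : ℕ)
          = ∑ m ∈ (S \ T).image (fun i : Fin n => (i : ℕ)), 2 ^ m := by
            rw [Finset.sum_image]
            intro a _ b _ hab
            exact Fin.val_injective hab
        _ ≤ ∑ m ∈ Finset.range d, 2 ^ m := by
            apply Finset.sum_le_sum_of_subset
            intro m hm
            obtain ⟨i, hi, rfl⟩ := Finset.mem_image.1 hm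
            exact Finset.mem_range.2 (h1 i hi)
        _ = 2 ^ d - 1 := sum_range_two_pow d
        _ < 2 ^ d := by have : 1 ≤ (2:ℕ)^d := Nat.one_le_two_pow; omega
    have hjpow : (2:ℕ) ^ d ≤ 2 ^ (j : ℕ) := Nat.pow_le_pow_right (by norm_num) hjd
    omega

lemma expand_sum {n k : ℕ} (γ : Fin n → ℕ)
    (hγ : ∀ i ∈ Finset.univ.filter fun i : Fin n => k ≤ (i : ℕ), γ i ≤ n) :
    ∑ i ∈ (Finset.univ.filter fun i : Fin n => k ≤ (i : ℕ)), 2 ^ (i : ℕ) * γ i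
      = ∑ t ∈ Finset.Icc 1 n, ∑ i ∈ (Finset.univ.filter fun i : Fin n => k ≤ (i : ℕ)).filter
          (fun i => t ≤ γ i), 2 ^ (i : ℕ) := by
  set A := Finset.univ.filter fun i : Fin n => k ≤ (i : ℕ) with hA
  have step1 : ∀ i ∈ A, 2 ^ (i : ℕ) * γ i
      = ∑ t ∈ Finset.Icc 1 n, if t ≤ γ i then 2 ^ (i : ℕ) else 0 := by
    intro i hi
    rw [← Finset.sum_filter]
    have hf : (Finset.Icc 1 n).filter (fun t => t ≤ γ i) = Finset.Icc 1 (γ i) := by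
      ext t
      simp only [Finset.mem_filter, Finset.mem_Icc]
      have := hγ i hi
      omega
    rw [hf, Finset.sum_const, Nat.card_Icc]
    simp [mul_comm]
  rw [Finset.sum_congr rfl step1, Finset.sum_comm]
  apply Finset.sum_congr rfl
  intro t _
  simp only [hA, Finset.sum_filter]

lemma key_nat {n k : ℕ} (hk1 : 1 ≤ k) (hkn : k ≤ n) {β : Fin n → ℕ}
    (hβ : IsParkingFunction n β) (hβ1 : ∀ i : Fin n, (i : ℕ) < k → β i = 1)
    (hne : β ≠ alphaK n k) :
    ∑ i ∈ (Finset.univ.filter fun i : Fin n => k ≤ (i : ℕ)), 2 ^ (i : ℕ) * β i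
      < ∑ i ∈ (Finset.univ.filter fun i : Fin n => k ≤ (i : ℕ)), 2 ^ (i : ℕ) * ((i : ℕ) + 1) := by
  set A := Finset.univ.filter fun i : Fin n => k ≤ (i : ℕ) with hA
  have hone : ∀ j, 1 ≤ β j := fun j => (Finset.mem_Icc.1 (hβ.1 j)).1
  have hlen : ∀ j, β j ≤ n := fun j => (Finset.mem_Icc.1 (hβ.1 j)).2
  -- rewrite both sides with level decomposition
  have hL := expand_sum (k := k) β (fun i _ => hlen i)
  have hR := expand_sum (k := k) (fun i : Fin n => (i : ℕ) + 1)
    (fun i _ => i.isLt)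
  rw [hL, hR]
  -- identify the right-hand level sets
  have hTeq : ∀ t ∈ Finset.Icc 1 n,
      A.filter (fun i => t ≤ ((i : Fin n) : ℕ) + 1)
        = Finset.univ.filter fun i : Fin n => max k (t - 1) ≤ (i : ℕ) := by
    intro t ht
    simp only [Finset.mem_Icc] at ht
    ext i
    simp only [hA, Finset.mem_filter, Finset.mem_univ, true_and, max_le_iff]
    omega
  -- per-level inequality (non-strict) and a strict level
  have hcard : ∀ t ∈ Finset.Icc 1 n,
      (A.filter (fun i => t ≤ β i)).card + (t - 1) ≤ n := by
    intro t ht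
    simp only [Finset.mem_Icc] at ht
    rcases Nat.eq_or_lt_of_le ht.1 with h1 | h2
    · have : (A.filter (fun i => t ≤ β i)).card ≤ n := by
        calc (A.filter (fun i => t ≤ β i)).card ≤ (Finset.univ : Finset (Fin n)).card :=
              Finset.card_le_card (fun i hi => Finset.mem_univ i)
          _ = n := by simp
      omega
    · have hpark := hβ.2 (t - 1) (Finset.mem_Icc.2 ⟨by omega, by omega⟩)
      have hdisj : Disjoint (A.filter (fun i => t ≤ β i))
          (Finset.univ.filter fun j => β j ≤ t - 1) := by
        rw [Finset.disjoint_left]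
        intro i hi hi'
        simp only [Finset.mem_filter] at hi hi'
        omega
      have := Finset.card_union_of_disjoint hdisj
      have hsub : (A.filter (fun i => t ≤ β i)) ∪ (Finset.univ.filter fun j => β j ≤ t - 1)
          ⊆ Finset.univ := fun i _ => Finset.mem_univ i
      have hcle := Finset.card_le_card hsub
      simp only [Finset.card_univ, Fintype.card_fin] at hcle
      omega
  have hS1 : ∀ t, ∀ i ∈ A.filter (fun i => t ≤ β i), k ≤ (i : ℕ) := by
    intro t i hi
    simp only [hA, Finset.mem_filter, Finset.mem_univ, true_and] at hi
    exact hi.1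
  -- find a strict level
  obtain ⟨i₀, hi₀⟩ : ∃ i : Fin n, β i ≠ alphaK n k i := by
    by_contra hc
    push_neg at hc
    exact hne (funext hc)
  have hi₀k : k ≤ (i₀ : ℕ) := by
    by_contra hc
    push_neg at hc
    exact hi₀ (by rw [alphaK, if_pos hc]; exact hβ1 i₀ hc)
  have hi₀v : β i₀ ≠ (i₀ : ℕ) + 1 := by
    intro hc; exact hi₀ (by rw [alphaK, if_neg (by omega)]; exact hc)
  have hstrict : ∃ t₀ ∈ Finset.Icc 1 n,
      A.filter (fun i => t₀ ≤ β i) ≠ Finset.univ.filter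
        fun i : Fin n => max k (t₀ - 1) ≤ (i : ℕ) := by
    rcases lt_or_gt_of_ne hi₀v with hlt | hgt
    · refine ⟨(i₀ : ℕ) + 1, Finset.mem_Icc.2 ⟨by omega, i₀.isLt⟩, ?_⟩
      intro hc
      have : i₀ ∈ Finset.univ.filter fun i : Fin n => max k ((i₀ : ℕ) + 1 - 1) ≤ (i : ℕ) := by
        simp only [Finset.mem_filter, Finset.mem_univ, true_and, max_le_iff]
        omega
      rw [← hc] at this
      simp only [Finset.mem_filter] at this
      omega
    · refine ⟨β i₀, Finset.mem_Icc.2 ⟨hone i₀, hlen i₀⟩, ?_⟩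
      intro hc
      have : i₀ ∈ A.filter (fun i => β i₀ ≤ β i) := by
        simp only [hA, Finset.mem_filter, Finset.mem_univ, true_and]
        exact ⟨hi₀k, le_refl _⟩
      rw [hc] at this
      simp only [Finset.mem_filter, Finset.mem_univ, true_and, max_le_iff] at this
      omega
  obtain ⟨t₀, ht₀, ht₀ne⟩ := hstrict
  apply Finset.sum_lt_sum
  · intro t ht
    rw [hTeq t ht]
    by_cases hEq : A.filter (fun i => t ≤ β i)
        = Finset.univ.filter fun i : Fin n => max k (t - 1) ≤ (i : ℕ)
    · rw [hEq]
    · exact le_of_lt (pow_sum_strict k (t-1) _ (hS1 t) (hcard t ht) hEq)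
  · refine ⟨t₀, ht₀, ?_⟩
    rw [hTeq t₀ ht₀]
    exact pow_sum_strict k (t₀-1) _ (hS1 t₀) (hcard t₀ ht₀) ht₀ne

noncomputable def cf (n k : ℕ) : Fin n → ℝ :=
  fun i => if (i : ℕ) < k then -((n : ℝ) * 2 ^ n + 1) else 2 ^ (i : ℕ)

lemma key_real {n k : ℕ} (hk : k ∈ Finset.Icc 1 n) {β : Fin n → ℕ}
    (hβ : IsParkingFunction n β) (hne : β ≠ alphaK n k) :
    ∑ i, cf n k i * (β i : ℝ) < ∑ i, cf n k i * (alphaK n k i : ℝ) := by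
  obtain ⟨hk1, hkn⟩ := Finset.mem_Icc.1 hk
  set T : ℝ := (n : ℝ) * 2 ^ n + 1 with hT
  set P := Finset.univ.filter fun i : Fin n => (i : ℕ) < k with hP
  set A := Finset.univ.filter fun i : Fin n => ¬ (i : ℕ) < k with hAdef
  have hAeq : A = Finset.univ.filter fun i : Fin n => k ≤ (i : ℕ) := by
    ext i; simp only [hAdef, Finset.mem_filter, Finset.mem_univ, true_and, not_lt]
  have hone : ∀ j, 1 ≤ β j := fun j => (Finset.mem_Icc.1 (hβ.1 j)).1
  have hlen : ∀ j, β j ≤ n := fun j => (Finset.mem_Icc.1 (hβ.1 j)).2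
  have hsplit : ∀ γ : Fin n → ℕ, ∑ i, cf n k i * (γ i : ℝ)
      = (-T) * ∑ i ∈ P, (γ i : ℝ) + ∑ i ∈ A, (2 : ℝ) ^ (i : ℕ) * (γ i : ℝ) := by
    intro γ
    rw [← Finset.sum_filter_add_sum_filter_not Finset.univ (fun i : Fin n => (i : ℕ) < k)
      (fun i => cf n k i * (γ i : ℝ)), Finset.mul_sum]
    congr 1
    · apply Finset.sum_congr rfl
      intro i hi
      simp only [Finset.mem_filter, Finset.mem_univ, true_and] at hi
      rw [cf, if_pos hi]
    · apply Finset.sum_congr rfl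
      intro i hi
      simp only [Finset.mem_filter, Finset.mem_univ, true_and] at hi
      rw [cf, if_neg hi]
  rw [hsplit β, hsplit (alphaK n k)]
  have hPcard : P.card = k := card_filter_lt n k hkn
  have hαP : ∑ i ∈ P, ((alphaK n k i : ℕ) : ℝ) = (k : ℝ) := by
    have : ∀ i ∈ P, ((alphaK n k i : ℕ) : ℝ) = 1 := by
      intro i hi
      rw [hP] at hi
      simp only [Finset.mem_filter, Finset.mem_univ, true_and] at hi
      rw [alphaK, if_pos hi]; norm_num
    rw [Finset.sum_congr rfl this, Finset.sum_const, hPcard]; simp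
  have hαA : ∑ i ∈ A, (2 : ℝ) ^ (i : ℕ) * ((alphaK n k i : ℕ) : ℝ)
      = ((∑ i ∈ (Finset.univ.filter fun i : Fin n => k ≤ (i : ℕ)),
          2 ^ (i : ℕ) * ((i : ℕ) + 1) : ℕ) : ℝ) := by
    rw [hAeq]
    push_cast
    apply Finset.sum_congr rfl
    intro i hi
    simp only [Finset.mem_filter, Finset.mem_univ, true_and] at hi
    rw [alphaK, if_neg (by omega)]
    push_cast
    ring
  by_cases hall : ∀ i : Fin n, (i : ℕ) < k → β i = 1
  · have hβP : ∑ i ∈ P, ((β i : ℕ) : ℝ) = (k : ℝ) := by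
      have : ∀ i ∈ P, ((β i : ℕ) : ℝ) = 1 := by
        intro i hi
        rw [hP] at hi
        simp only [Finset.mem_filter, Finset.mem_univ, true_and] at hi
        rw [hall i hi]; norm_num
      rw [Finset.sum_congr rfl this, Finset.sum_const, hPcard]; simp
    have hβA : ∑ i ∈ A, (2 : ℝ) ^ (i : ℕ) * ((β i : ℕ) : ℝ)
        = ((∑ i ∈ (Finset.univ.filter fun i : Fin n => k ≤ (i : ℕ)),
            2 ^ (i : ℕ) * β i : ℕ) : ℝ) := by
      rw [hAeq]; push_cast; rfl
    rw [hβP, hαP, hβA, hαA]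
    have := key_nat hk1 hkn hβ hall hne
    have hcast : ((∑ i ∈ (Finset.univ.filter fun i : Fin n => k ≤ (i : ℕ)),
        2 ^ (i : ℕ) * β i : ℕ) : ℝ) < ((∑ i ∈ (Finset.univ.filter fun i : Fin n => k ≤ (i : ℕ)),
        2 ^ (i : ℕ) * ((i : ℕ) + 1) : ℕ) : ℝ) := by exact_mod_cast this
    linarith
  · push_neg at hall
    obtain ⟨i₁, hi₁k, hi₁⟩ := hall
    have hi₁2 : 2 ≤ β i₁ := by have := hone i₁; omega
    -- lower bound on sum over P
    have hβPn : k + 1 ≤ ∑ i ∈ P, β i := by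
      have hlt : ∑ i ∈ P, 1 < ∑ i ∈ P, β i := by
        apply Finset.sum_lt_sum
        · intro i _; exact hone i
        · refine ⟨i₁, ?_, by omega⟩
          rw [hP]; simp only [Finset.mem_filter, Finset.mem_univ, true_and]; exact hi₁k
      rw [Finset.sum_const, hPcard] at hlt
      simpa using hlt
    have hβP : (k : ℝ) + 1 ≤ ∑ i ∈ P, ((β i : ℕ) : ℝ) := by
      have h2 := (Nat.cast_le (α := ℝ)).2 hβPn
      push_cast at h2
      exact h2
    -- upper bound on sum over A
    have hβAn : ∑ i ∈ A, 2 ^ (i : ℕ) * β i ≤ n * 2 ^ n := by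
      calc ∑ i ∈ A, 2 ^ (i : ℕ) * β i ≤ ∑ i ∈ A, 2 ^ (i : ℕ) * n := by
            apply Finset.sum_le_sum
            intro i _
            exact Nat.mul_le_mul_left _ (hlen i)
        _ ≤ ∑ i : Fin n, 2 ^ (i : ℕ) * n :=
            Finset.sum_le_sum_of_subset (Finset.filter_subset _ _)
        _ = (∑ i : Fin n, 2 ^ (i : ℕ)) * n := by rw [Finset.sum_mul]
        _ = (∑ m ∈ Finset.range n, 2 ^ m) * n := by
            rw [Fin.sum_univ_eq_sum_range (fun m => 2 ^ m) n]
        _ = (2 ^ n - 1) * n := by rw [sum_range_two_pow]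
        _ ≤ n * 2 ^ n := by
            rw [mul_comm]
            exact Nat.mul_le_mul_left _ (Nat.sub_le _ _)
    have hβA : ∑ i ∈ A, (2 : ℝ) ^ (i : ℕ) * ((β i : ℕ) : ℝ) ≤ (n : ℝ) * 2 ^ n := by
      have : ((∑ i ∈ A, 2 ^ (i : ℕ) * β i : ℕ) : ℝ) ≤ (((n * 2 ^ n : ℕ)) : ℝ) := by
        exact_mod_cast hβAn
      push_cast at this
      exact this
    have hαA0 : (0 : ℝ) ≤ ∑ i ∈ A, (2 : ℝ) ^ (i : ℕ) * ((alphaK n k i : ℕ) : ℝ) := by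
      apply Finset.sum_nonneg
      intro i _
      positivity
    have hT1 : (n : ℝ) * 2 ^ n < T := by rw [hT]; linarith
    have hTpos : 0 < T := by positivity
    rw [hαP]
    have hb1 : (-T) * ∑ i ∈ P, ((β i : ℕ) : ℝ) ≤ (-T) * ((k : ℝ) + 1) := by
      apply mul_le_mul_of_nonpos_left hβP (by linarith)
    nlinarith [hβA, hαA0, hb1]

lemma partB {n k : ℕ} (hk : k ∈ Finset.Icc 1 n) (σ : Equiv.Perm (Fin n)) :
    (fun i => (alphaK n k (σ i) : ℝ)) ∈ (parkingFunctionPolytope n).extremePoints ℝ := by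
  classical
  set v : Fin n → ℝ := fun i => (alphaK n k (σ i) : ℝ) with hv
  set w : Fin n → ℝ := fun i => cf n k (σ i) with hw
  set f : (Fin n → ℝ) → ℝ := fun x => ∑ i, w i * x i with hf
  have hvmem : v ∈ parkingFunctionPoints n :=
    ⟨fun i => alphaK n k (σ i), isParkingFunction_comp_perm (isParkingFunction_alphaK hk) σ, rfl⟩
  have hfv : f v = ∑ i, cf n k i * (alphaK n k i : ℝ) := by
    rw [hf]
    exact Equiv.sum_comp σ (fun j => cf n k j * (alphaK n k j : ℝ))
  -- strict maximality among parking points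
  have hstrict : ∀ y ∈ parkingFunctionPoints n, y ≠ v → f y < f v := by
    rintro y ⟨γ, hγ, rfl⟩ hne
    have hδ : IsParkingFunction n (fun j => γ (σ.symm j)) :=
      isParkingFunction_comp_perm hγ σ.symm
    have hδne : (fun j => γ (σ.symm j)) ≠ alphaK n k := by
      intro hc
      apply hne
      funext i
      have h2 : γ (σ.symm (σ i)) = alphaK n k (σ i) := congrFun hc (σ i)
      simp only [Equiv.symm_apply_apply] at h2
      show ((γ i : ℕ) : ℝ) = ((alphaK n k (σ i) : ℕ) : ℝ)
      exact_mod_cast h2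
    have := key_real hk hδ hδne
    rw [hfv]
    calc f (fun i => (γ i : ℝ)) = ∑ j, cf n k j * ((γ (σ.symm j) : ℕ) : ℝ) := by
          rw [hf]
          rw [← Equiv.sum_comp σ (fun j => cf n k j * ((γ (σ.symm j) : ℕ) : ℝ))]
          apply Finset.sum_congr rfl
          intro i _
          simp [hw]
      _ < _ := this
  have hle : ∀ y ∈ parkingFunctionPoints n, f y ≤ f v := by
    intro y hy
    by_cases h : y = v
    · rw [h]
    · exact le_of_lt (hstrict y hy h)
  have hlin : ∀ (a b : ℝ) (x y : Fin n → ℝ), f (a • x + b • y) = a * f x + b * f y := by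
    intro a b x y
    rw [hf]
    simp only [Pi.add_apply, Pi.smul_apply, smul_eq_mul]
    rw [Finset.mul_sum, Finset.mul_sum, ← Finset.sum_add_distrib]
    apply Finset.sum_congr rfl
    intro i _
    ring
  have hbound : ∀ x ∈ parkingFunctionPolytope n, f x ≤ f v := by
    intro x hx
    have hconv : Convex ℝ {x | f x ≤ f v} := by
      intro p hp q hq a b ha hb hab
      simp only [Set.mem_setOf_eq] at hp hq ⊢
      rw [hlin]
      have hfv1 : a * f v + b * f v = f v := by rw [← add_mul, hab, one_mul]
      have g1 := mul_le_mul_of_nonneg_left hp ha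
      have g2 := mul_le_mul_of_nonneg_left hq hb
      linarith
    exact convexHull_min hle hconv hx
  -- uniqueness of the maximizer on the polytope
  have huniq : ∀ x ∈ parkingFunctionPolytope n, f x = f v → x = v := by
    intro x hx hfx
    set F : Finset (Fin n → ℝ) := (finite_pfp n).toFinset with hF
    have hFcoe : (F : Set (Fin n → ℝ)) = parkingFunctionPoints n := (finite_pfp n).coe_toFinset
    have hx' : x ∈ convexHull ℝ (F : Set (Fin n → ℝ)) := by rwa [hFcoe]
    obtain ⟨wt, hwt0, hwt1, hwtx⟩ := Finset.mem_convexHull'.1 hx'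
    by_contra hxv
    have hex : ∃ y₀ ∈ F, wt y₀ ≠ 0 ∧ y₀ ≠ v := by
      by_contra hc
      push_neg at hc
      apply hxv
      have : ∀ y ∈ F, wt y • y = wt y • v := by
        intro y hy
        by_cases h0 : wt y = 0
        · rw [h0]; simp
        · rw [(hc y hy h0)]
      rw [← hwtx, Finset.sum_congr rfl this, ← Finset.sum_smul, hwt1, one_smul]
    obtain ⟨y₀, hy₀F, hwy₀, hy₀v⟩ := hex
    have hy₀mem : y₀ ∈ parkingFunctionPoints n := by rw [← hFcoe]; exact_mod_cast hy₀F
    have hfy₀ : f y₀ < f v := hstrict y₀ hy₀mem hy₀v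
    have hfx' : f x = ∑ y ∈ F, wt y * f y := by
      rw [← hwtx, hf]
      have h1 : ∀ i, (∑ y ∈ F, wt y • y) i = ∑ y ∈ F, wt y * y i := by
        intro i
        rw [Finset.sum_apply]
        simp
      calc ∑ i, w i * (∑ y ∈ F, wt y • y) i
          = ∑ i, ∑ y ∈ F, wt y * (w i * y i) := by
            apply Finset.sum_congr rfl
            intro i _
            rw [h1 i, Finset.mul_sum]
            apply Finset.sum_congr rfl
            intro y _
            ring
        _ = ∑ y ∈ F, ∑ i, wt y * (w i * y i) := Finset.sum_comm
        _ = ∑ y ∈ F, wt y * f y := by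
            apply Finset.sum_congr rfl
            intro y _
            rw [hf, Finset.mul_sum]
    have hsum0 : ∑ y ∈ F, wt y * (f v - f y) = 0 := by
      have : ∑ y ∈ F, wt y * (f v - f y) = (∑ y ∈ F, wt y) * f v - ∑ y ∈ F, wt y * f y := by
        rw [Finset.sum_mul, ← Finset.sum_sub_distrib]
        apply Finset.sum_congr rfl
        intro y _
        ring
      rw [this, hwt1, one_mul, ← hfx', hfx]
      ring
    have hterm : ∀ y ∈ F, 0 ≤ wt y * (f v - f y) := by
      intro y hy
      have hymem : y ∈ parkingFunctionPoints n := by rw [← hFcoe]; exact_mod_cast hy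
      have := hle y hymem
      have := hwt0 y hy
      nlinarith
    have hy₀pos : 0 < wt y₀ * (f v - f y₀) := by
      have h0 := hwt0 y₀ hy₀F
      have : 0 < wt y₀ := lt_of_le_of_ne h0 (Ne.symm hwy₀)
      nlinarith
    have := Finset.single_le_sum hterm hy₀F
    rw [hsum0] at this
    linarith
  -- conclude extremeness
  constructor
  · exact subset_convexHull ℝ _ hvmem
  · intro x₁ hx₁ x₂ hx₂ hseg
    obtain ⟨a, b, ha, hb, hab, hsum⟩ := hseg
    have hfeq : a * f x₁ + b * f x₂ = f v := by rw [← hlin, hsum]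
    have h1 : f x₁ ≤ f v := hbound x₁ hx₁
    have h2 : f x₂ ≤ f v := hbound x₂ hx₂
    have hz : a * (f v - f x₁) + b * (f v - f x₂) = 0 := by
      linear_combination (f v) * hab - hfeq
    have t1 : 0 ≤ a * (f v - f x₁) := mul_nonneg ha.le (by linarith)
    have t2 : 0 ≤ b * (f v - f x₂) := mul_nonneg hb.le (by linarith)
    have e1 : a * (f v - f x₁) = 0 := by linarith
    have e2 : b * (f v - f x₂) = 0 := by linarith
    have he1 : f x₁ = f v := by
      rcases mul_eq_zero.1 e1 with h | h
      · exact absurd h (ne_of_gt ha)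
      · linarith
    have he2 : f x₂ = f v := by
      rcases mul_eq_zero.1 e2 with h | h
      · exact absurd h (ne_of_gt hb)
      · linarith
    exact huniq x₁ hx₁ he1


/-- A point `v ∈ ℝⁿ` is an extreme point (vertex) of the parking function
polytope `𝒫F_n` if and only if `v` is a rearrangement of
`α⁽ᵏ⁾ = (1, …, 1, k+1, …, n)` for some `k ∈ {1, …, n}`. -/
theorem extremePoints_parkingFunctionPolytope (n : ℕ) (hn : 0 < n) (v : Fin n → ℝ) :
    v ∈ (parkingFunctionPolytope n).extremePoints ℝ ↔
      ∃ k ∈ Finset.Icc 1 n, ∃ σ : Equiv.Perm (Fin n),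
        v = fun i => (alphaK n k (σ i) : ℝ) := by
  constructor
  · intro hv
    have hvpt : v ∈ parkingFunctionPoints n :=
      extremePoints_convexHull_subset hv
    obtain ⟨β, hβ, rfl⟩ := hvpt
    have hr : ∀ j, 2 ≤ β j → (Finset.univ.filter fun l => β l ≤ β j).card ≤ β j := by
      intro j hj
      by_contra hc
      push_neg at hc
      have hc' : β j + 1 ≤ (Finset.univ.filter fun l => β l ≤ β j).card := hc
      have hma := parking_minus hβ hj
      have hpa := parking_plus hβ hc'
      set am : Fin n → ℝ := fun i => ((Function.update β j (β j - 1) i : ℕ) : ℝ) with ham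
      set bp : Fin n → ℝ := fun i => ((Function.update β j (β j + 1) i : ℕ) : ℝ) with hbp
      have hamem : am ∈ parkingFunctionPolytope n :=
        subset_convexHull ℝ _ ⟨_, hma, rfl⟩
      have hbmem : bp ∈ parkingFunctionPolytope n :=
        subset_convexHull ℝ _ ⟨_, hpa, rfl⟩
      have hseg : (fun i => ((β i : ℕ) : ℝ)) ∈ openSegment ℝ am bp := by
        refine ⟨1/2, 1/2, by norm_num, by norm_num, by norm_num, ?_⟩
        funext i
        simp only [Pi.add_apply, Pi.smul_apply, smul_eq_mul, ham, hbp]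
        rcases eq_or_ne i j with rfl | hne
        · rw [Function.update_self, Function.update_self]
          have h1 : ((β i - 1 : ℕ) : ℝ) = (β i : ℝ) - 1 := by
            have : 1 ≤ β i := by omega
            push_cast [Nat.cast_sub this]
            ring
          push_cast [h1]
          ring
        · rw [Function.update_of_ne hne, Function.update_of_ne hne]
          ring
      have heq1 := hv.2 hamem hbmem hseg
      have := congrFun heq1 j
      simp only [ham, Function.update_self] at this
      have hcast : β j - 1 = β j := by exact_mod_cast this
      omega
    obtain ⟨k, hk, σ, hβeq⟩ := structure_of_rigid hn hβ hr
    exact ⟨k, hk, σ, by rw [hβeq]⟩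
  · rintro ⟨k, hk, σ, rfl⟩
    exact partB hk σ
end

section
/- For every positive integer n, the number of extreme points of the parking function polytope 𝒫F_n equals Σ_{k=1}^{n} n!/k!, i.e., n!·(1/1! + 1/2! + ⋯ + 1/n!). -/
open Finset

lemma pf_one_le {n : ℕ} {α : Fin n → ℕ} (h : IsParkingFunction n α) (j : Fin n) :
    1 ≤ α j := (Finset.mem_Icc.1 (h.1 j)).1

lemma pf_le_n {n : ℕ} {α : Fin n → ℕ} (h : IsParkingFunction n α) (j : Fin n) :
    α j ≤ n := (Finset.mem_Icc.1 (h.1 j)).2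

lemma mem_poly_one_le {n : ℕ} {x : Fin n → ℝ} (hx : x ∈ parkingFunctionPolytope n)
    (j : Fin n) : 1 ≤ x j := by
  have hsub : parkingFunctionPolytope n ⊆ {y : Fin n → ℝ | 1 ≤ y j} := by
    apply convexHull_min _ (convex_halfSpace_ge ⟨fun a b => rfl, fun c y => rfl⟩ 1)
    rintro y ⟨α, hα, rfl⟩
    simp only [Set.mem_setOf_eq]
    exact_mod_cast pf_one_le hα j
  exact hsub hx

lemma minsum {n : ℕ} : ∀ m, m ≤ n →
    ∑ w ∈ Icc 1 n, min m (n + 1 - w) = ∑ i ∈ Icc (n + 1 - m) n, i := by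
  intro m
  induction m with
  | zero => intro _; simp
  | succ m ih =>
    intro hm
    have ihm := ih (Nat.le_of_succ_le hm)
    have hpt : ∀ w ∈ Icc 1 n,
        min (m + 1) (n + 1 - w) = min m (n + 1 - w) + (if w ≤ n - m then 1 else 0) := by
      intro w hw
      rw [Finset.mem_Icc] at hw
      split <;> omega
    rw [Finset.sum_congr rfl hpt, Finset.sum_add_distrib, ihm, Finset.sum_boole]
    have hf : (Icc 1 n).filter (fun x => x ≤ n - m) = Icc 1 (n - m) := by
      ext x; simp only [Finset.mem_filter, Finset.mem_Icc]; omega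
    have h2 : Icc (n + 1 - (m + 1)) n = insert (n - m) (Icc (n + 1 - m) n) := by
      ext x; simp only [Finset.mem_insert, Finset.mem_Icc]; omega
    rw [hf, h2, Finset.sum_insert (by simp only [Finset.mem_Icc]; omega), Nat.card_Icc]
    simp only [Nat.cast_id]
    omega

lemma pf_sum_le {n : ℕ} {α : Fin n → ℕ} (hα : IsParkingFunction n α) (T : Finset (Fin n)) :
    ∑ j ∈ T, α j ≤ ∑ i ∈ Icc (n + 1 - T.card) n, i := by
  have hTn : T.card ≤ n := by
    simpa using Finset.card_le_card (Finset.subset_univ T)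
  have h1 : ∀ j, α j = ∑ w ∈ Icc 1 n, if w ≤ α j then 1 else 0 := by
    intro j
    rw [Finset.sum_boole]
    have hf : (Icc 1 n).filter (fun w => w ≤ α j) = Icc 1 (α j) := by
      have := pf_le_n hα j
      ext w; simp only [Finset.mem_filter, Finset.mem_Icc]; omega
    rw [hf, Nat.card_Icc]
    simp
  calc ∑ j ∈ T, α j = ∑ j ∈ T, ∑ w ∈ Icc 1 n, if w ≤ α j then 1 else 0 :=
        Finset.sum_congr rfl fun j _ => h1 j
    _ = ∑ w ∈ Icc 1 n, ∑ j ∈ T, if w ≤ α j then 1 else 0 := Finset.sum_comm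
    _ ≤ ∑ w ∈ Icc 1 n, min T.card (n + 1 - w) := by
        apply Finset.sum_le_sum
        intro w hw
        rw [Finset.mem_Icc] at hw
        rw [Finset.sum_boole]
        simp only [Nat.cast_id]
        have hb1 : (T.filter fun j => w ≤ α j).card ≤ T.card :=
          Finset.card_le_card (Finset.filter_subset _ _)
        have hb2 : (T.filter fun j => w ≤ α j).card + (w - 1) ≤ n := by
          have hd : Disjoint (T.filter fun j => w ≤ α j)
              (Finset.univ.filter fun j => α j ≤ w - 1) := by
            rw [Finset.disjoint_left]
            intro j hj1 hj2
            rw [Finset.mem_filter] at hj1 hj2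
            omega
          have hcard : w - 1 ≤ (Finset.univ.filter fun j => α j ≤ w - 1).card := by
            rcases Nat.eq_or_lt_of_le hw.1 with h | h
            · omega
            · exact hα.2 (w - 1) (Finset.mem_Icc.mpr ⟨by omega, by omega⟩)
          have hu := Finset.card_le_card (Finset.subset_univ
            ((T.filter fun j => w ≤ α j) ∪ (Finset.univ.filter fun j => α j ≤ w - 1)))
          rw [Finset.card_union_of_disjoint hd] at hu
          simp only [Finset.card_univ, Fintype.card_fin] at hu
          omega
        omega
    _ = ∑ i ∈ Icc (n + 1 - T.card) n, i := minsum T.card hTn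

lemma mem_poly_sum_le {n : ℕ} {x : Fin n → ℝ} (hx : x ∈ parkingFunctionPolytope n)
    (T : Finset (Fin n)) :
    ∑ j ∈ T, x j ≤ ∑ i ∈ Icc (n + 1 - T.card) n, (i : ℝ) := by
  have lin : IsLinearMap ℝ (fun y : Fin n → ℝ => ∑ j ∈ T, y j) := by
    constructor
    · intro a b; simp [Finset.sum_add_distrib]
    · intro c y; simp [Finset.mul_sum]
  have hsub : parkingFunctionPolytope n ⊆
      {y : Fin n → ℝ | ∑ j ∈ T, y j ≤ ∑ i ∈ Icc (n + 1 - T.card) n, (i : ℝ)} := by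
    apply convexHull_min _ (convex_halfSpace_le lin _)
    rintro y ⟨α, hα, rfl⟩
    simp only [Set.mem_setOf_eq]
    have h2 : ((∑ j ∈ T, α j : ℕ) : ℝ) ≤ ((∑ i ∈ Icc (n + 1 - T.card) n, i : ℕ) : ℝ) :=
      Nat.cast_le.mpr (pf_sum_le hα T)
    push_cast at h2
    exact h2
  exact hsub hx

lemma not_extreme_of_bad {n : ℕ} {α : Fin n → ℕ} (hα : IsParkingFunction n α) {j0 : Fin n}
    (h2 : 2 ≤ α j0) (hlt : α j0 < (Finset.univ.filter fun j => α j ≤ α j0).card) :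
    (fun i => (α i : ℝ)) ∉ (parkingFunctionPolytope n).extremePoints ℝ := by
  set v := α j0 with hv
  have hcn : (Finset.univ.filter fun j => α j ≤ v).card ≤ n := by
    have := Finset.card_le_card (Finset.subset_univ (Finset.univ.filter fun j => α j ≤ v))
    simpa using this
  set β := Function.update α j0 (v + 1) with hβdef
  set γ := Function.update α j0 (v - 1) with hγdef
  have hβj0 : β j0 = v + 1 := Function.update_self _ _ _
  have hγj0 : γ j0 = v - 1 := Function.update_self _ _ _
  have hβne : ∀ j, j ≠ j0 → β j = α j := fun j hj => Function.update_of_ne hj _ _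
  have hγne : ∀ j, j ≠ j0 → γ j = α j := fun j hj => Function.update_of_ne hj _ _
  have hβ : IsParkingFunction n β := by
    constructor
    · intro j
      by_cases hj : j = j0
      · subst hj; rw [hβj0, Finset.mem_Icc]; omega
      · rw [hβne j hj]; exact hα.1 j
    · intro i hi
      by_cases hiv : i = v
      · subst hiv
        have he : (Finset.univ.filter fun j => β j ≤ v) =
            (Finset.univ.filter fun j => α j ≤ v).erase j0 := by
          ext j
          simp only [Finset.mem_filter, Finset.mem_erase, Finset.mem_univ, true_and]
          by_cases hj : j = j0
          · subst hj; rw [hβj0]; simp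
          · rw [hβne j hj]; simp [hj]
        rw [he, Finset.card_erase_of_mem]
        · omega
        · simp only [Finset.mem_filter, Finset.mem_univ, true_and]; omega
      · have he : (Finset.univ.filter fun j => β j ≤ i) =
            (Finset.univ.filter fun j => α j ≤ i) := by
          ext j
          simp only [Finset.mem_filter, Finset.mem_univ, true_and]
          by_cases hj : j = j0
          · subst hj; rw [hβj0]; omega
          · rw [hβne j hj]
        rw [he]; exact hα.2 i hi
  have hγ : IsParkingFunction n γ := by
    constructor
    · intro j
      by_cases hj : j = j0
      · rw [hj, hγj0, Finset.mem_Icc]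
        have := pf_le_n hα j0
        omega
      · rw [hγne j hj]; exact hα.1 j
    · intro i hi
      refine le_trans (hα.2 i hi) (Finset.card_le_card ?_)
      intro j hj
      simp only [Finset.mem_filter, Finset.mem_univ, true_and] at hj ⊢
      by_cases hjj : j = j0
      · rw [hjj, hγj0]; rw [hjj] at hj; omega
      · rw [hγne j hjj]; exact hj
  intro hext
  have memβ : (fun i => (β i : ℝ)) ∈ parkingFunctionPolytope n :=
    subset_convexHull ℝ _ ⟨β, hβ, rfl⟩
  have memγ : (fun i => (γ i : ℝ)) ∈ parkingFunctionPolytope n :=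
    subset_convexHull ℝ _ ⟨γ, hγ, rfl⟩
  have hseg : (fun i => (α i : ℝ)) ∈
      openSegment ℝ (fun i => (β i : ℝ)) (fun i => (γ i : ℝ)) := by
    refine ⟨1/2, 1/2, by norm_num, by norm_num, by norm_num, ?_⟩
    funext j
    simp only [Pi.add_apply, Pi.smul_apply, smul_eq_mul]
    by_cases hj : j = j0
    · subst hj
      rw [hβj0, hγj0]
      have h1 : ((v - 1 : ℕ) : ℝ) = (v : ℝ) - 1 := by
        rw [Nat.cast_sub (by omega)]; norm_num
      push_cast [h1]
      ring
    · rw [hβne j hj, hγne j hj]; ring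
  have hconc := (hext.2 memβ memγ hseg)
  have hj0 := congrFun hconc j0
  simp only [hβj0] at hj0
  have : (v : ℝ) + 1 = (v : ℝ) := by push_cast at hj0; linarith [hj0]
  linarith

def GoodPF (n : ℕ) (α : Fin n → ℕ) : Prop :=
  IsParkingFunction n α ∧
    ∀ j, α j = 1 ∨ (Finset.univ.filter fun j' => α j' ≤ α j).card ≤ α j

lemma combo_eq_lower {a b u v c : ℝ} (ha : 0 < a) (hb : 0 < b) (hab : a + b = 1)
    (hu : c ≤ u) (hv : c ≤ v) (h : a * u + b * v = c) : u = c ∧ v = c := by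
  have hc : a * c + b * c = c := by rw [← add_mul, hab, one_mul]
  have h1 : a * u ≤ a * c := by
    have := mul_le_mul_of_nonneg_left hv hb.le
    linarith
  have h2 : b * v ≤ b * c := by
    have := mul_le_mul_of_nonneg_left hu ha.le
    linarith
  exact ⟨le_antisymm (le_of_mul_le_mul_left h1 ha) hu,
    le_antisymm (le_of_mul_le_mul_left h2 hb) hv⟩

lemma combo_eq_upper {a b u v c : ℝ} (ha : 0 < a) (hb : 0 < b) (hab : a + b = 1)
    (hu : u ≤ c) (hv : v ≤ c) (h : a * u + b * v = c) : u = c ∧ v = c := by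
  have hc : a * c + b * c = c := by rw [← add_mul, hab, one_mul]
  have h1 : a * c ≤ a * u := by
    have := mul_le_mul_of_nonneg_left hv hb.le
    linarith
  have h2 : b * c ≤ b * v := by
    have := mul_le_mul_of_nonneg_left hu ha.le
    linarith
  exact ⟨le_antisymm hu (le_of_mul_le_mul_left h1 ha),
    le_antisymm hv (le_of_mul_le_mul_left h2 hb)⟩

lemma good_card_eq {n : ℕ} {α : Fin n → ℕ} (hg : GoodPF n α) {j : Fin n}
    (h2 : 2 ≤ α j) :
    (Finset.univ.filter fun j' => α j' ≤ α j).card = α j ∧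
      (Finset.univ.filter fun j' => α j' ≤ α j - 1).card = α j - 1 := by
  obtain ⟨hα, hgood⟩ := hg
  have hvn : α j ≤ n := pf_le_n hα j
  have hle : (Finset.univ.filter fun j' => α j' ≤ α j).card ≤ α j := by
    rcases hgood j with h | h
    · omega
    · exact h
  have hge : α j ≤ (Finset.univ.filter fun j' => α j' ≤ α j).card :=
    hα.2 (α j) (Finset.mem_Icc.mpr ⟨by omega, hvn⟩)
  have hge' : α j - 1 ≤ (Finset.univ.filter fun j' => α j' ≤ α j - 1).card :=
    hα.2 (α j - 1) (Finset.mem_Icc.mpr ⟨by omega, by omega⟩)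
  have hsub : insert j (Finset.univ.filter fun j' => α j' ≤ α j - 1) ⊆
      Finset.univ.filter fun j' => α j' ≤ α j := by
    intro j' hj'
    rw [Finset.mem_insert] at hj'
    simp only [Finset.mem_filter, Finset.mem_univ, true_and]
    rcases hj' with rfl | hj'
    · omega
    · simp only [Finset.mem_filter, Finset.mem_univ, true_and] at hj'; omega
  have hins := Finset.card_le_card hsub
  rw [Finset.card_insert_of_notMem (by
    simp only [Finset.mem_filter, Finset.mem_univ, true_and]; omega)] at hins
  exact ⟨by omega, by omega⟩

lemma good_injOn {n : ℕ} {α : Fin n → ℕ} (hg : GoodPF n α) {j1 j2 : Fin n}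
    (h2 : 2 ≤ α j1) (heq : α j1 = α j2) : j1 = j2 := by
  obtain ⟨hc1, hc2⟩ := good_card_eq hg h2
  have hsub : (Finset.univ.filter fun j' => α j' ≤ α j1 - 1) ∪ {j1, j2} ⊆
      Finset.univ.filter fun j' => α j' ≤ α j1 := by
    intro j' hj'
    rw [Finset.mem_union] at hj'
    simp only [Finset.mem_filter, Finset.mem_univ, true_and]
    rcases hj' with hj' | hj'
    · simp only [Finset.mem_filter, Finset.mem_univ, true_and] at hj'; omega
    · rw [Finset.mem_insert, Finset.mem_singleton] at hj'
      rcases hj' with rfl | rfl <;> omega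
  by_contra hne
  have hdisj : Disjoint (Finset.univ.filter fun j' => α j' ≤ α j1 - 1)
      ({j1, j2} : Finset (Fin n)) := by
    rw [Finset.disjoint_right]
    intro j' hj' hmem
    rw [Finset.mem_insert, Finset.mem_singleton] at hj'
    simp only [Finset.mem_filter, Finset.mem_univ, true_and] at hmem
    rcases hj' with rfl | rfl <;> omega
  have hc3 : ({j1, j2} : Finset (Fin n)).card = 2 := Finset.card_pair hne
  have := Finset.card_le_card hsub
  rw [Finset.card_union_of_disjoint hdisj, hc3, hc1, hc2] at this
  omega

lemma extreme_of_good {n : ℕ} {α : Fin n → ℕ} (hg : GoodPF n α) :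
    (fun i => (α i : ℝ)) ∈ (parkingFunctionPolytope n).extremePoints ℝ := by
  obtain ⟨hα, hgood⟩ := hg
  refine mem_extremePoints.2 ⟨subset_convexHull ℝ _ ⟨α, hα, rfl⟩, ?_⟩
  intro x₁ hx₁ x₂ hx₂ hseg
  obtain ⟨a, b, ha, hb, hab, hsum⟩ := hseg
  have hptwise : ∀ j : Fin n, a * x₁ j + b * x₂ j = (α j : ℝ) := by
    intro j
    have := congrFun hsum j
    simpa using this
  have key : ∀ j : Fin n, x₁ j = (α j : ℝ) ∧ x₂ j = (α j : ℝ) := by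
    intro j
    by_cases h1 : α j = 1
    · have hres := combo_eq_lower ha hb hab (mem_poly_one_le hx₁ j)
        (mem_poly_one_le hx₂ j) (by rw [hptwise j, h1]; norm_num)
      rw [h1]
      exact_mod_cast hres
    · have h2 : 2 ≤ α j := by have := pf_one_le hα j; omega
      set v := α j with hv
      obtain ⟨c1, c2⟩ := good_card_eq ⟨hα, hgood⟩ h2
      have hvn : v ≤ n := pf_le_n hα j
      set Tv := Finset.univ.filter (fun j' => v ≤ α j') with hTv
      set Tv1 := Finset.univ.filter (fun j' => v + 1 ≤ α j') with hTv1
      have hTvcompl : Tv = Finset.univ \ (Finset.univ.filter fun j' => α j' ≤ v - 1) := by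
        ext j'
        simp only [hTv, Finset.mem_filter, Finset.mem_sdiff, Finset.mem_univ, true_and]
        omega
      have cardTv : Tv.card = n + 1 - v := by
        rw [hTvcompl, Finset.card_sdiff_of_subset (Finset.filter_subset _ _)]
        rw [Finset.card_univ, Fintype.card_fin, c2]
        omega
      have hTv1compl : Tv1 = Finset.univ \ (Finset.univ.filter fun j' => α j' ≤ v) := by
        ext j'
        simp only [hTv1, Finset.mem_filter, Finset.mem_sdiff, Finset.mem_univ, true_and]
        omega
      have cardTv1 : Tv1.card = n - v := by
        rw [hTv1compl, Finset.card_sdiff_of_subset (Finset.filter_subset _ _)]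
        rw [Finset.card_univ, Fintype.card_fin, c1]
      have hinj : ∀ j1 ∈ Tv, ∀ j2 ∈ Tv, α j1 = α j2 → j1 = j2 := by
        intro j1 hj1 j2 hj2 heq
        simp only [hTv, Finset.mem_filter, Finset.mem_univ, true_and] at hj1
        exact good_injOn ⟨hα, hgood⟩ (by omega) heq
      have himg : Tv.image α = Finset.Icc v n := by
        apply Finset.eq_of_subset_of_card_le
        · intro w hw
          rw [Finset.mem_image] at hw
          obtain ⟨j', hj', rfl⟩ := hw
          simp only [hTv, Finset.mem_filter, Finset.mem_univ, true_and] at hj'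
          exact Finset.mem_Icc.mpr ⟨hj', pf_le_n hα j'⟩
        · rw [Finset.card_image_of_injOn fun x hx y hy => hinj x hx y hy, cardTv,
            Nat.card_Icc]
      have hsumα : ∑ j' ∈ Tv, α j' = ∑ i ∈ Finset.Icc v n, i := by
        rw [← himg, Finset.sum_image hinj]
      have hSα : ∑ j' ∈ Tv, ((α j' : ℝ)) = ∑ i ∈ Finset.Icc v n, (i : ℝ) := by
        have hc := congrArg (Nat.cast : ℕ → ℝ) hsumα
        push_cast at hc
        exact hc
      have hrw : n + 1 - (n + 1 - v) = v := by omega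
      have hrw1 : n + 1 - (n - v) = v + 1 := by omega
      have hS1le : ∑ j' ∈ Tv, x₁ j' ≤ ∑ i ∈ Finset.Icc v n, (i : ℝ) := by
        have := mem_poly_sum_le hx₁ Tv
        rwa [cardTv, hrw] at this
      have hS2le : ∑ j' ∈ Tv, x₂ j' ≤ ∑ i ∈ Finset.Icc v n, (i : ℝ) := by
        have := mem_poly_sum_le hx₂ Tv
        rwa [cardTv, hrw] at this
      have hcombo : a * (∑ j' ∈ Tv, x₁ j') + b * (∑ j' ∈ Tv, x₂ j')
          = ∑ i ∈ Finset.Icc v n, (i : ℝ) := by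
        rw [← hSα, Finset.mul_sum, Finset.mul_sum, ← Finset.sum_add_distrib]
        exact Finset.sum_congr rfl fun j' _ => hptwise j'
      obtain ⟨hS1, hS2⟩ := combo_eq_upper ha hb hab hS1le hS2le hcombo
      have hS1le' : ∑ j' ∈ Tv1, x₁ j' ≤ ∑ i ∈ Finset.Icc (v + 1) n, (i : ℝ) := by
        have := mem_poly_sum_le hx₁ Tv1
        rwa [cardTv1, hrw1] at this
      have hS2le' : ∑ j' ∈ Tv1, x₂ j' ≤ ∑ i ∈ Finset.Icc (v + 1) n, (i : ℝ) := by
        have := mem_poly_sum_le hx₂ Tv1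
        rwa [cardTv1, hrw1] at this
      have hjmem : j ∉ Tv1 := by
        simp only [hTv1, Finset.mem_filter, Finset.mem_univ, true_and]
        omega
      have hsplit : Tv = insert j Tv1 := by
        ext j'
        simp only [hTv, hTv1, Finset.mem_filter, Finset.mem_insert, Finset.mem_univ,
          true_and]
        constructor
        · intro hj'
          by_cases he : α j' = v
          · left
            exact (good_injOn ⟨hα, hgood⟩ h2 (by omega)).symm
          · right; omega
        · rintro (rfl | h) <;> omega
      have hMv : ∑ i ∈ Finset.Icc v n, (i : ℝ)
          = v + ∑ i ∈ Finset.Icc (v + 1) n, (i : ℝ) := by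
        rw [show Finset.Icc v n = insert v (Finset.Icc (v + 1) n) from by
          ext w; simp only [Finset.mem_Icc, Finset.mem_insert]; omega]
        rw [Finset.sum_insert (by simp only [Finset.mem_Icc]; omega)]
      have hx1j : (v : ℝ) ≤ x₁ j := by
        rw [hsplit, Finset.sum_insert hjmem] at hS1
        linarith
      have hx2j : (v : ℝ) ≤ x₂ j := by
        rw [hsplit, Finset.sum_insert hjmem] at hS2
        linarith
      exact combo_eq_lower ha hb hab hx1j hx2j (hptwise j)
  exact ⟨funext fun j => (key j).1, funext fun j => (key j).2⟩

def VtxData (n : ℕ) := Σ k : Fin n, (Fin (n - (k.1 + 1)) ↪ Fin n)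

noncomputable instance (n : ℕ) : Fintype (VtxData n) := by
  unfold VtxData; infer_instance

noncomputable def vtxFun (n : ℕ) (d : VtxData n) : Fin n → ℕ :=
  fun j => if h : ∃ t, d.2 t = j then d.1.1 + 2 + ((Classical.choose h : Fin (n - (d.1.1 + 1))) : ℕ) else 1

lemma vtxFun_apply_mem {n : ℕ} (d : VtxData n) (t : Fin (n - (d.1.1 + 1))) :
    vtxFun n d (d.2 t) = d.1.1 + 2 + (t : ℕ) := by
  have h : ∃ t', d.2 t' = d.2 t := ⟨t, rfl⟩
  rw [vtxFun, dif_pos h]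
  have := Classical.choose_spec h
  have ht : Classical.choose h = t := d.2.injective this
  rw [ht]

lemma vtxFun_apply_not_mem {n : ℕ} (d : VtxData n) {j : Fin n}
    (h : ¬∃ t, d.2 t = j) : vtxFun n d j = 1 := by
  rw [vtxFun, dif_neg h]

lemma card_fin_lt (m X : ℕ) :
    (Finset.univ.filter fun t : Fin m => (t : ℕ) < X).card = min m X := by
  rcases le_total m X with h | h
  · rw [Finset.filter_true_of_mem (fun t _ => lt_of_lt_of_le t.isLt h)]
    simp [min_eq_left h]
  · have : (Finset.univ.filter fun t : Fin m => (t : ℕ) < X).card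
        = (Finset.range X).card := by
      exact Finset.card_bij (fun t _ => (t : ℕ))
        (fun t ht => Finset.mem_range.mpr (Finset.mem_filter.mp ht).2)
        (fun t1 h1 t2 h2 he => Fin.ext he)
        (fun y hy => ⟨⟨y, lt_of_lt_of_le (Finset.mem_range.mp hy) h⟩,
          Finset.mem_filter.mpr ⟨Finset.mem_univ _, Finset.mem_range.mp hy⟩, rfl⟩)
    rw [this, Finset.card_range, min_eq_right h]

lemma vtxFun_count {n : ℕ} (d : VtxData n) (i : ℕ) (hi1 : 1 ≤ i) :
    (Finset.univ.filter fun j => vtxFun n d j ≤ i).card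
      = (d.1.1 + 1) + min (n - (d.1.1 + 1)) (i - (d.1.1 + 1)) := by
  set k' := d.1.1 with hk'
  set m := n - (k' + 1) with hm
  set e := d.2 with he
  have hkn : k' + 1 ≤ n := d.1.isLt
  set S := Finset.univ.filter (fun j : Fin n => ∃ t, e t = j) with hS
  have hSimg : S = Finset.univ.image e := by
    ext j
    simp only [hS, Finset.mem_filter, Finset.mem_image, Finset.mem_univ, true_and]
  have hScard : S.card = m := by
    rw [hSimg, Finset.card_image_of_injective _ e.injective, Finset.card_univ,
      Fintype.card_fin]
  have hsplit : (Finset.univ.filter fun j => vtxFun n d j ≤ i)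
      = (Finset.univ \ S) ∪ (S.filter fun j => vtxFun n d j ≤ i) := by
    ext j
    simp only [Finset.mem_union, Finset.mem_filter, Finset.mem_sdiff, Finset.mem_univ,
      true_and]
    by_cases hj : ∃ t, e t = j
    · simp [hS, hj]
    · have h1 : vtxFun n d j = 1 := vtxFun_apply_not_mem d hj
      simp [hS, hj, h1, hi1]
  have hdisj : Disjoint (Finset.univ \ S) (S.filter fun j => vtxFun n d j ≤ i) := by
    rw [Finset.disjoint_left]
    intro j hj1 hj2
    rw [Finset.mem_sdiff] at hj1
    exact hj1.2 (Finset.mem_of_mem_filter _ hj2)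
  have hinner : (S.filter fun j => vtxFun n d j ≤ i).card = min m (i - (k' + 1)) := by
    have himg : S.filter (fun j => vtxFun n d j ≤ i)
        = (Finset.univ.filter fun t : Fin m => (t : ℕ) < i - (k' + 1)).image e := by
      ext j
      simp only [Finset.mem_filter, Finset.mem_image, Finset.mem_univ, true_and, hS]
      constructor
      · rintro ⟨⟨t, rfl⟩, hle⟩
        rw [vtxFun_apply_mem d t] at hle
        exact ⟨t, by omega, rfl⟩
      · rintro ⟨t, ht, rfl⟩
        refine ⟨⟨t, rfl⟩, ?_⟩
        rw [vtxFun_apply_mem d t]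
        omega
    rw [himg, Finset.card_image_of_injective _ e.injective, card_fin_lt]
  rw [hsplit, Finset.card_union_of_disjoint hdisj, Finset.card_sdiff_of_subset (Finset.subset_univ S),
    Finset.card_univ, Fintype.card_fin, hScard, hinner]
  omega

lemma vtxFun_good {n : ℕ} (d : VtxData n) : GoodPF n (vtxFun n d) := by
  set k' := d.1.1 with hk'
  have hkn : k' + 1 ≤ n := d.1.isLt
  have hval : ∀ j, vtxFun n d j = 1 ∨
      (2 + k' ≤ vtxFun n d j ∧ vtxFun n d j ≤ n) := by
    intro j
    by_cases hj : ∃ t, d.2 t = j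
    · right
      obtain ⟨t, rfl⟩ := hj
      rw [vtxFun_apply_mem d t]
      have := t.isLt
      omega
    · left; exact vtxFun_apply_not_mem d hj
  constructor
  · constructor
    · intro j
      rcases hval j with h | h <;> rw [Finset.mem_Icc] <;> omega
    · intro i hi
      rw [Finset.mem_Icc] at hi
      rw [vtxFun_count d i hi.1]
      omega
  · intro j
    rcases hval j with h | h
    · left; exact h
    · right
      rw [vtxFun_count d (vtxFun n d j) (by omega)]
      omega

lemma vtxFun_ones {n : ℕ} (d : VtxData n) :
    (Finset.univ.filter fun j => vtxFun n d j = 1).card = d.1.1 + 1 := by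
  have hpf := (vtxFun_good d).1
  have he : (Finset.univ.filter fun j => vtxFun n d j = 1)
      = (Finset.univ.filter fun j => vtxFun n d j ≤ 1) := by
    ext j
    simp only [Finset.mem_filter, Finset.mem_univ, true_and]
    have := pf_one_le hpf j
    omega
  rw [he, vtxFun_count d 1 le_rfl]
  omega

lemma vtxFun_injective (n : ℕ) : Function.Injective (vtxFun n) := by
  rintro ⟨k1, e1⟩ ⟨k2, e2⟩ hfe
  have hk : k1 = k2 := by
    have h1 := vtxFun_ones (n := n) ⟨k1, e1⟩
    have h2 := vtxFun_ones (n := n) ⟨k2, e2⟩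
    rw [hfe, h2] at h1
    have h1' : (k2 : ℕ) + 1 = (k1 : ℕ) + 1 := h1
    exact Fin.ext (by omega)

  subst hk
  have he : e1 = e2 := by
    apply Function.Embedding.ext
    intro t
    have hv1 : vtxFun n ⟨k1, e1⟩ (e1 t) = k1.1 + 2 + (t : ℕ) := vtxFun_apply_mem ⟨k1, e1⟩ t
    rw [hfe] at hv1
    by_cases h : ∃ t2, e2 t2 = e1 t
    · obtain ⟨t2, ht2⟩ := h
      rw [← ht2, vtxFun_apply_mem ⟨k1, e2⟩ t2] at hv1
      have hv1' : (k1 : ℕ) + 2 + (t2 : ℕ) = (k1 : ℕ) + 2 + (t : ℕ) := hv1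
      rw [← ht2]
      congr 1
      exact Fin.ext (by omega)
    · rw [vtxFun_apply_not_mem ⟨k1, e2⟩ h] at hv1
      have hv1' : (1 : ℕ) = (k1 : ℕ) + 2 + (t : ℕ) := hv1
      omega
  rw [he]

lemma good_of_extreme {n : ℕ} {x : Fin n → ℝ}
    (hx : x ∈ (parkingFunctionPolytope n).extremePoints ℝ) :
    ∃ α : Fin n → ℕ, GoodPF n α ∧ x = fun i => (α i : ℝ) := by
  have hmem : x ∈ parkingFunctionPoints n := extremePoints_convexHull_subset hx
  obtain ⟨α, hα, rfl⟩ := hmem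
  refine ⟨α, ⟨hα, ?_⟩, rfl⟩
  intro j
  by_contra hcon
  push_neg at hcon
  obtain ⟨h1, h2⟩ := hcon
  have hone := pf_one_le hα j
  exact not_extreme_of_bad hα (j0 := j) (by omega) (by omega) hx

lemma exists_data_of_good {n : ℕ} (hn : 0 < n) {α : Fin n → ℕ} (hg : GoodPF n α) :
    ∃ d : VtxData n, vtxFun n d = α := by
  obtain ⟨hα, hgood⟩ := hg
  set k := (Finset.univ.filter fun j => α j = 1).card with hk
  have hkn : k ≤ n := by
    have := Finset.card_le_card (Finset.subset_univ (Finset.univ.filter fun j => α j = 1))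
    simpa using this
  have hk1 : 1 ≤ k := by
    have hc := hα.2 1 (Finset.mem_Icc.mpr ⟨le_rfl, hn⟩)
    refine le_trans hc (Finset.card_le_card ?_)
    intro j hj
    simp only [Finset.mem_filter, Finset.mem_univ, true_and] at hj ⊢
    have := pf_one_le hα j
    omega
  set B := Finset.univ.filter (fun j => 2 ≤ α j) with hB
  have hBcompl : B = Finset.univ \ (Finset.univ.filter fun j => α j = 1) := by
    ext j
    simp only [hB, Finset.mem_filter, Finset.mem_sdiff, Finset.mem_univ, true_and]
    have := pf_one_le hα j
    omega
  have hBcard : B.card = n - k := by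
    rw [hBcompl, Finset.card_sdiff_of_subset (Finset.filter_subset _ _), Finset.card_univ,
      Fintype.card_fin]
  have hBk : ∀ j ∈ B, k + 1 ≤ α j := by
    intro j hj
    simp only [hB, Finset.mem_filter, Finset.mem_univ, true_and] at hj
    have hgj : (Finset.univ.filter fun j' => α j' ≤ α j).card ≤ α j := by
      rcases hgood j with h | h
      · omega
      · exact h
    have hsub : insert j (Finset.univ.filter fun j' => α j' = 1) ⊆
        Finset.univ.filter fun j' => α j' ≤ α j := by
      intro j' hj'
      rw [Finset.mem_insert] at hj'
      simp only [Finset.mem_filter, Finset.mem_univ, true_and]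
      rcases hj' with rfl | hj'
      · omega
      · simp only [Finset.mem_filter, Finset.mem_univ, true_and] at hj'
        omega
    have hcard := Finset.card_le_card hsub
    rw [Finset.card_insert_of_notMem (by
      simp only [Finset.mem_filter, Finset.mem_univ, true_and]; omega)] at hcard
    omega
  have himgB : B.image α = Finset.Icc (k + 1) n := by
    apply Finset.eq_of_subset_of_card_le
    · intro w hw
      rw [Finset.mem_image] at hw
      obtain ⟨j, hj, rfl⟩ := hw
      exact Finset.mem_Icc.mpr ⟨hBk j hj, pf_le_n hα j⟩
    · have hinj : ∀ j1 ∈ B, ∀ j2 ∈ B, α j1 = α j2 → j1 = j2 := by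
        intro j1 hj1 j2 hj2 heq
        simp only [hB, Finset.mem_filter, Finset.mem_univ, true_and] at hj1
        exact good_injOn ⟨hα, hgood⟩ hj1 heq
      rw [Finset.card_image_of_injOn fun x hx y hy => hinj x hx y hy, hBcard,
        Nat.card_Icc]
      omega
  have hk1n : k - 1 < n := by omega
  have hex : ∀ t : Fin (n - (k - 1 + 1)), ∃ j, 2 ≤ α j ∧ α j = k + 1 + (t : ℕ) := by
    intro t
    have htlt : (t : ℕ) < n - k := by have := t.isLt; omega
    have hmem : k + 1 + (t : ℕ) ∈ Finset.Icc (k + 1) n := Finset.mem_Icc.mpr ⟨by omega, by omega⟩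
    rw [← himgB, Finset.mem_image] at hmem
    obtain ⟨j, hjB, hje⟩ := hmem
    simp only [hB, Finset.mem_filter, Finset.mem_univ, true_and] at hjB
    exact ⟨j, hjB, hje⟩
  have hespec : ∀ t : Fin (n - (k - 1 + 1)),
      2 ≤ α ((hex t).choose) ∧ α ((hex t).choose) = k + 1 + (t : ℕ) :=
    fun t => (hex t).choose_spec
  have heinj : Function.Injective (fun t => (hex t).choose) := by
    intro t1 t2 h12
    have h12' : (hex t1).choose = (hex t2).choose := h12
    have h1 := (hespec t1).2
    have h2 := (hespec t2).2
    rw [h12'] at h1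
    exact Fin.ext (by omega)
  refine ⟨⟨⟨k - 1, hk1n⟩, ⟨fun t => (hex t).choose, heinj⟩⟩, ?_⟩
  funext j
  by_cases hj : ∃ t : Fin (n - (k - 1 + 1)), (hex t).choose = j
  · obtain ⟨t, rfl⟩ := hj
    have hval : vtxFun n ⟨⟨k - 1, hk1n⟩, ⟨fun t => (hex t).choose, heinj⟩⟩ ((hex t).choose)
        = k - 1 + 2 + (t : ℕ) :=
      vtxFun_apply_mem ⟨⟨k - 1, hk1n⟩, ⟨fun t => (hex t).choose, heinj⟩⟩ t
    rw [hval, (hespec t).2]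
    omega
  · rw [vtxFun_apply_not_mem ⟨⟨k - 1, hk1n⟩, ⟨fun t => (hex t).choose, heinj⟩⟩ hj]
    by_contra hne
    have h2 : 2 ≤ α j := by have := pf_one_le hα j; omega
    have hjB : j ∈ B := by
      simp only [hB, Finset.mem_filter, Finset.mem_univ, true_and]; exact h2
    have himg : α j ∈ Finset.Icc (k + 1) n := by
      rw [← himgB]; exact Finset.mem_image_of_mem α hjB
    rw [Finset.mem_Icc] at himg
    have ht : α j - (k + 1) < n - (k - 1 + 1) := by omega
    set t : Fin (n - (k - 1 + 1)) := ⟨α j - (k + 1), ht⟩ with htdef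
    have hα_et : α ((hex t).choose) = α j := by
      have := (hespec t).2
      simp only [htdef] at this
      omega
    have := good_injOn ⟨hα, hgood⟩ (hespec t).1 hα_et
    exact hj ⟨t, this⟩

/-- The number of extreme points (vertices) of the parking function
polytope `𝒫F_n` equals `∑_{k=1}^{n} n!/k! = n!·(1/1! + 1/2! + ⋯ + 1/n!)`. -/
theorem card_extremePoints_parkingFunctionPolytope (n : ℕ) (hn : 0 < n) :
    Nat.card ((parkingFunctionPolytope n).extremePoints ℝ) =
      ∑ k ∈ Finset.Icc 1 n, n.factorial / k.factorial := by
  classical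
  have hrange : (parkingFunctionPolytope n).extremePoints ℝ
      = Set.range (fun d : VtxData n => (fun j => (vtxFun n d j : ℝ))) := by
    ext x
    constructor
    · intro hx
      obtain ⟨α, hg, rfl⟩ := good_of_extreme hx
      obtain ⟨d, hd⟩ := exists_data_of_good hn hg
      exact ⟨d, by simp only [hd]⟩
    · rintro ⟨d, rfl⟩
      exact extreme_of_good (vtxFun_good d)
  have hinj : Function.Injective (fun d : VtxData n => (fun j => (vtxFun n d j : ℝ))) := by
    intro d1 d2 h
    apply vtxFun_injective n
    funext j
    have h' : (fun j => ((vtxFun n d1 j : ℕ) : ℝ)) = (fun j => ((vtxFun n d2 j : ℕ) : ℝ)) := h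
    exact_mod_cast congrFun h' j
  rw [hrange, Nat.card_range_of_injective hinj, Nat.card_eq_fintype_card]
  have hsig : Fintype.card (VtxData n)
      = ∑ k' : Fin n, Fintype.card (Fin (n - (k'.1 + 1)) ↪ Fin n) :=
    (Fintype.card_congr (Equiv.refl _)).trans Fintype.card_sigma
  rw [hsig]
  have hterm : ∀ k' : Fin n, Fintype.card (Fin (n - (k'.1 + 1)) ↪ Fin n)
      = n.descFactorial (n - (k'.1 + 1)) := by
    intro k'
    rw [Fintype.card_embedding_eq, Fintype.card_fin, Fintype.card_fin]
  rw [Finset.sum_congr rfl (fun k' _ => hterm k')]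
  rw [Fin.sum_univ_eq_sum_range (fun k' => n.descFactorial (n - (k' + 1))) n]
  refine Finset.sum_bij' (fun i _ => i + 1) (fun k _ => k - 1) ?_ ?_ ?_ ?_ ?_
  · intro a ha
    rw [Finset.mem_range] at ha
    show a + 1 ∈ Finset.Icc 1 n
    rw [Finset.mem_Icc]
    omega
  · intro a ha
    rw [Finset.mem_Icc] at ha
    show a - 1 ∈ Finset.range n
    rw [Finset.mem_range]
    omega
  · intro a ha
    show a + 1 - 1 = a
    omega
  · intro a ha
    have ha' := Finset.mem_Icc.mp ha
    show a - 1 + 1 = a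
    omega
  · intro a ha
    rw [Finset.mem_range] at ha
    rw [Nat.descFactorial_eq_div (by omega : n - (a + 1) ≤ n)]
    have harg : n - (n - (a + 1)) = a + 1 := by omega
    rw [harg]
end
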